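/- arXiv:math/0506119 — 6 statements merged into one kernel-verified Lean document; each statement's English description precedes it below -/
import Mathlib

section
/- Let g ≥ 1 and E_0 < E_1 < ... < E_{2g+1} be real numbers. On each open gap (E_{2k-1}, E_{2k}) the function R^{1/2} is real-valued and nonvanishing. If p is a monic polynomial of degree g with real coefficients such that ∫_{E_{2k-1}}^{E_{2k}} p(λ)/R^{1/2}(λ) dλ = 0 for every k = 1,...,g, then p has exactly one zero, which is simple, in each open gap (E_{2k-1}, E_{2k}); in particular all zeros of p are real. -/
open MeasureTheory Filter

lemma cpow_half_pos (r : ℝ) (hr : 0 < r) : (r:ℂ) ^ ((1:ℂ)/2) = (Real.sqrt r : ℂ) := by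
  rw [Real.sqrt_eq_rpow, show ((1:ℂ)/2) = ((1/2:ℝ):ℂ) by push_cast; ring,
    ← Complex.ofReal_cpow hr.le]

lemma cpow_half_neg (r : ℝ) (hr : r < 0) :
    (r:ℂ) ^ ((1:ℂ)/2) = (Real.sqrt (-r) : ℂ) * Complex.I := by
  rw [Complex.ofReal_cpow_of_nonpos hr.le,
    show (-(r:ℂ)) = ((-r:ℝ):ℂ) by push_cast; ring,
    cpow_half_pos (-r) (by linarith)]
  congr 1
  rw [show ((Real.pi:ℂ)*Complex.I*((1:ℂ)/2)) = ((Real.pi/2 : ℝ):ℂ)*Complex.I by push_cast; ring,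
    Complex.exp_mul_I, ← Complex.ofReal_cos, ← Complex.ofReal_sin]
  simp [Real.cos_pi_div_two, Real.sin_pi_div_two]

lemma gap_formula (g k : ℕ) (hk1 : 1 ≤ k) (hkg : k ≤ g) (E : ℕ → ℝ)
    (hlt : ∀ i j, i < j → j ≤ 2*g+1 → E i < E j)
    (x : ℝ) (hx : x ∈ Set.Ioo (E (2*k-1)) (E (2*k))) :
    -∏ j ∈ Finset.range (2*g+2), ((x:ℂ) - (E j : ℂ)) ^ ((1:ℂ)/2)
      = ((((-(-1:ℝ)^(g+1-k)) * ((∏ j ∈ Finset.range (2*k), Real.sqrt (x - E j)) *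
          ∏ i ∈ Finset.range (2*g+2-2*k), Real.sqrt (E (2*k+i) - x))) : ℝ) : ℂ) := by
  obtain ⟨hxa, hxb⟩ := hx
  have h2g : 2*g+2 = 2*k + (2*g+2-2*k) := by omega
  rw [h2g, Finset.prod_range_add]
  have h1 : ∀ j ∈ Finset.range (2*k), ((x:ℂ) - (E j : ℂ)) ^ ((1:ℂ)/2)
      = ((Real.sqrt (x - E j) : ℝ) : ℂ) := by
    intro j hj
    simp only [Finset.mem_range] at hj
    have hEj : E j < x := by
      rcases eq_or_lt_of_le (Nat.le_of_lt_succ (by omega : j < (2*k-1)+1)) with h | h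
      · rwa [h]
      · exact lt_trans (hlt j (2*k-1) h (by omega)) hxa
    rw [show ((x:ℂ) - (E j : ℂ)) = (((x - E j : ℝ)) : ℂ) by push_cast; ring,
      cpow_half_pos _ (by linarith)]
  have h2 : ∀ i ∈ Finset.range (2*g+2-2*k), ((x:ℂ) - (E (2*k+i) : ℂ)) ^ ((1:ℂ)/2)
      = ((Real.sqrt (E (2*k+i) - x) : ℝ) : ℂ) * Complex.I := by
    intro i hi
    simp only [Finset.mem_range] at hi
    have hEi : x < E (2*k+i) := by
      rcases Nat.eq_zero_or_pos i with h | h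
      · simpa [h] using hxb
      · exact lt_trans hxb (hlt (2*k) (2*k+i) (by omega) (by omega))
    rw [show ((x:ℂ) - (E (2*k+i) : ℂ)) = (((x - E (2*k+i) : ℝ)) : ℂ) by push_cast; ring,
      cpow_half_neg _ (by linarith)]
    norm_num
  rw [Finset.prod_congr rfl h1, Finset.prod_congr rfl h2]
  rw [Finset.prod_mul_distrib, Finset.prod_const]
  have hI : (Complex.I) ^ (2*g+2-2*k) = ((-1:ℝ)^(g+1-k) : ℂ) := by
    rw [show 2*g+2-2*k = 2*(g+1-k) by omega, pow_mul, Complex.I_sq]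
    push_cast
    ring
  rw [Finset.card_range, hI, show 2*k + (2*g+2-2*k) - 2*k = 2*g+2-2*k from by omega]
  push_cast
  ring


lemma const_sign (f : ℝ → ℝ) (hf : Continuous f) (a b : ℝ) (hab : a < b)
    (h0 : ∀ x ∈ Set.Ioo a b, f x ≠ 0) :
    (∀ x ∈ Set.Ioo a b, 0 < f x) ∨ (∀ x ∈ Set.Ioo a b, f x < 0) := by
  have hm : (a+b)/2 ∈ Set.Ioo a b := ⟨by linarith, by linarith⟩
  rcases (h0 _ hm).lt_or_gt with hneg | hpos
  · right
    intro x hx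
    by_contra hle
    have hxpos : 0 < f x := (h0 x hx).lt_or_gt.resolve_left hle
    have hsub : Set.uIcc ((a+b)/2) x ⊆ Set.Ioo a b :=
      Set.ordConnected_Ioo.uIcc_subset hm hx
    have : (0:ℝ) ∈ Set.uIcc (f ((a+b)/2)) (f x) :=
      Set.mem_uIcc.2 (Or.inl ⟨hneg.le, hxpos.le⟩)
    obtain ⟨c, hc, hfc⟩ := intermediate_value_uIcc (hf.continuousOn) this
    exact h0 c (hsub hc) hfc
  · left
    intro x hx
    by_contra hle
    have hxneg : f x < 0 := (h0 x hx).lt_or_gt.resolve_right hle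
    have hsub : Set.uIcc ((a+b)/2) x ⊆ Set.Ioo a b :=
      Set.ordConnected_Ioo.uIcc_subset hm hx
    have : (0:ℝ) ∈ Set.uIcc (f ((a+b)/2)) (f x) :=
      Set.mem_uIcc.2 (Or.inr ⟨hxneg.le, hpos.le⟩)
    obtain ⟨c, hc, hfc⟩ := intermediate_value_uIcc (hf.continuousOn) this
    exact h0 c (hsub hc) hfc

lemma exists_root_in_gap (a b : ℝ) (hab : a < b) (c : ℝ) (hc : c ≠ 0)
    (T : ℝ → ℝ) (hT : Continuous T) (hTpos : ∀ x ∈ Set.Icc a b, 0 < T x)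
    (φ : ℝ → ℝ) (hφ : Continuous φ)
    (F : ℝ → ℝ)
    (hF : ∀ x ∈ Set.Ioo a b, F x =
      φ x / (c * (Real.sqrt (x - a) * Real.sqrt (b - x) * T x)))
    (hint : ∫ x in a..b, F x = 0) :
    ∃ x ∈ Set.Ioo a b, φ x = 0 := by
  by_contra hcon
  push_neg at hcon
  set S : ℝ → ℝ := fun x => Real.sqrt (x - a) * Real.sqrt (b - x) * T x with hS
  set G : ℝ → ℝ := fun x => φ x / (c * S x) with hG
  have hScont : Continuous S := by
    apply Continuous.mul
    apply Continuous.mul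
    · exact Real.continuous_sqrt.comp (continuous_id.sub continuous_const)
    · exact Real.continuous_sqrt.comp (continuous_const.sub continuous_id)
    · exact hT
  have hSpos : ∀ x ∈ Set.Ioo a b, 0 < S x := by
    intro x hx
    have h1 : 0 < Real.sqrt (x - a) := Real.sqrt_pos.2 (by linarith [hx.1])
    have h2 : 0 < Real.sqrt (b - x) := Real.sqrt_pos.2 (by linarith [hx.2])
    exact mul_pos (mul_pos h1 h2) (hTpos x ⟨hx.1.le, hx.2.le⟩)
  have hGmeas : Measurable G :=
    hφ.measurable.div (measurable_const.mul hScont.measurable)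
  set m : ℝ := (a+b)/2 with hm
  have ham : a < m := by simp only [hm]; linarith
  have hmb : m < b := by simp only [hm]; linarith
  -- bound on φ
  obtain ⟨M0, hM0⟩ := isCompact_Icc.exists_bound_of_continuousOn
    (s := Set.Icc a b) hφ.continuousOn
  set M : ℝ := max M0 0 with hMdef
  have hM : ∀ x ∈ Set.Icc a b, |φ x| ≤ M := fun x hx =>
    le_trans (hM0 x hx) (le_max_left _ _)
  have hMnn : 0 ≤ M := le_max_right _ _
  -- left piece
  have hG1 : IntervalIntegrable G volume a m := by
    set U : ℝ → ℝ := fun x => Real.sqrt (b - x) * T x with hU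
    have hUcont : Continuous U :=
      (Real.continuous_sqrt.comp (continuous_const.sub continuous_id)).mul hT
    obtain ⟨z, hz, hzmin⟩ := isCompact_Icc.exists_isMinOn (Set.nonempty_Icc.2 ham.le)
      hUcont.continuousOn
    set δ : ℝ := U z with hδ
    have hδpos : 0 < δ := by
      have h1 : 0 < Real.sqrt (b - z) := Real.sqrt_pos.2 (by
        have := hz.2; linarith)
      exact mul_pos h1 (hTpos z ⟨hz.1, by linarith [hz.2]⟩)
    set C : ℝ := M / (|c| * δ) with hC
    have hCnn : 0 ≤ C := div_nonneg hMnn (by positivity)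
    have hDint : IntervalIntegrable (fun x => C * (x - a) ^ (-(1/2) : ℝ)) volume a m := by
      have h1 : IntervalIntegrable (fun x : ℝ => (x - a) ^ (-(1/2) : ℝ)) volume a m := by
        simpa using (intervalIntegral.intervalIntegrable_rpow'
          (a := 0) (b := m - a) (r := -(1/2)) (by norm_num)).comp_sub_right a
      exact h1.const_mul C
    apply hDint.mono_fun hGmeas.aestronglyMeasurable
    rw [Set.uIoc_of_le ham.le]
    filter_upwards [ae_restrict_mem measurableSet_Ioc] with x hx
    have hxa : a < x := hx.1
    have hxm : x ≤ m := hx.2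
    have hxb : x < b := lt_of_le_of_lt hxm hmb
    have hsq : 0 < Real.sqrt (x - a) := Real.sqrt_pos.2 (by linarith)
    have hUx : δ ≤ U x := hzmin ⟨hxa.le, hxm⟩
    have hSx : S x = Real.sqrt (x - a) * U x := by simp only [hS, hU]; ring
    have hSxpos : 0 < S x := hSpos x ⟨hxa, hxb⟩
    have hrw : (x - a) ^ (-(1/2) : ℝ) = (Real.sqrt (x - a))⁻¹ := by
      rw [Real.rpow_neg (by linarith), Real.sqrt_eq_rpow]
    have hGle : |G x| ≤ C * (x - a) ^ (-(1/2) : ℝ) := by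
      rw [hrw]
      have h1 : |G x| = |φ x| / (|c| * S x) := by
        rw [hG]; rw [abs_div, abs_mul, abs_of_pos hSxpos]
      have key : |φ x| / (|c| * S x) ≤ M / (|c| * δ * Real.sqrt (x-a)) := by
        apply div_le_div₀ hMnn (hM x ⟨hxa.le, hxb.le⟩) (by positivity)
        calc |c| * δ * Real.sqrt (x - a) = |c| * (Real.sqrt (x-a) * δ) := by ring
          _ ≤ |c| * S x := by
              rw [hSx]
              exact mul_le_mul_of_nonneg_left
                (mul_le_mul_of_nonneg_left hUx (Real.sqrt_nonneg _)) (abs_nonneg _)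
      have heq : M / (|c| * δ * Real.sqrt (x-a)) = C * (Real.sqrt (x-a))⁻¹ := by
        rw [hC]
        field_simp
      rw [h1, ← heq]
      exact key
    calc ‖G x‖ = |G x| := rfl
      _ ≤ C * (x - a) ^ (-(1/2) : ℝ) := hGle
      _ ≤ ‖C * (x - a) ^ (-(1/2) : ℝ)‖ := le_abs_self _
  -- right piece
  have hG2 : IntervalIntegrable G volume m b := by
    set U : ℝ → ℝ := fun x => Real.sqrt (x - a) * T x with hU
    have hUcont : Continuous U :=
      (Real.continuous_sqrt.comp (continuous_id.sub continuous_const)).mul hT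
    obtain ⟨z, hz, hzmin⟩ := isCompact_Icc.exists_isMinOn (s := Set.Icc m b)
      (Set.nonempty_Icc.2 hmb.le) hUcont.continuousOn
    set δ : ℝ := U z with hδ
    have hδpos : 0 < δ := by
      have h1 : 0 < Real.sqrt (z - a) := Real.sqrt_pos.2 (by
        have := hz.1; linarith)
      exact mul_pos h1 (hTpos z ⟨by linarith [hz.1], hz.2⟩)
    set C : ℝ := M / (|c| * δ) with hC
    have hCnn : 0 ≤ C := div_nonneg hMnn (by positivity)
    have hDint : IntervalIntegrable (fun x => C * (b - x) ^ (-(1/2) : ℝ)) volume m b := by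
      have h1 : IntervalIntegrable (fun x : ℝ => (b - x) ^ (-(1/2) : ℝ)) volume m b := by
        simpa using ((intervalIntegral.intervalIntegrable_rpow'
          (a := 0) (b := b - m) (r := -(1/2)) (by norm_num)).comp_sub_left b).symm
      exact h1.const_mul C
    apply hDint.mono_fun hGmeas.aestronglyMeasurable
    rw [Set.uIoc_of_le hmb.le]
    filter_upwards [ae_restrict_mem measurableSet_Ioc] with x hx
    have hxm : m < x := hx.1
    have hxb : x ≤ b := hx.2
    have hxa : a < x := lt_trans ham hxm
    have hxb' : x < b ∨ x = b := lt_or_eq_of_le hxb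
    rcases eq_or_lt_of_le hxb with rfl | hxblt
    · -- x = b : G b = φ b / (c * S b), S b = 0 since sqrt(b-b)=0
      have : S x = 0 := by simp [hS]
      have : G x = 0 := by simp [hG, this]
      rw [this]
      simp only [norm_zero]
      positivity
    have hsq : 0 < Real.sqrt (b - x) := Real.sqrt_pos.2 (by linarith)
    have hUx : δ ≤ U x := hzmin ⟨hxm.le, hxb⟩
    have hSx : S x = Real.sqrt (b - x) * U x := by simp only [hS, hU]; ring
    have hSxpos : 0 < S x := hSpos x ⟨hxa, hxblt⟩
    have hrw : (b - x) ^ (-(1/2) : ℝ) = (Real.sqrt (b - x))⁻¹ := by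
      rw [Real.rpow_neg (by linarith), Real.sqrt_eq_rpow]
    have hGle : |G x| ≤ C * (b - x) ^ (-(1/2) : ℝ) := by
      rw [hrw]
      have h1 : |G x| = |φ x| / (|c| * S x) := by
        rw [hG]; rw [abs_div, abs_mul, abs_of_pos hSxpos]
      have key : |φ x| / (|c| * S x) ≤ M / (|c| * δ * Real.sqrt (b-x)) := by
        apply div_le_div₀ hMnn (hM x ⟨hxa.le, hxb⟩) (by positivity)
        calc |c| * δ * Real.sqrt (b - x) = |c| * (Real.sqrt (b-x) * δ) := by ring
          _ ≤ |c| * S x := by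
              rw [hSx]
              exact mul_le_mul_of_nonneg_left
                (mul_le_mul_of_nonneg_left hUx (Real.sqrt_nonneg _)) (abs_nonneg _)
      have heq : M / (|c| * δ * Real.sqrt (b-x)) = C * (Real.sqrt (b-x))⁻¹ := by
        rw [hC]
        field_simp
      rw [h1, ← heq]
      exact key
    calc ‖G x‖ = |G x| := rfl
      _ ≤ C * (b - x) ^ (-(1/2) : ℝ) := hGle
      _ ≤ ‖C * (b - x) ^ (-(1/2) : ℝ)‖ := le_abs_self _
  have hGint : IntervalIntegrable G volume a b := hG1.trans hG2
  -- sign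
  obtain ⟨ε, hε⟩ : ∃ ε : ℝ, ∀ x ∈ Set.Ioo a b, 0 < ε * G x := by
    rcases const_sign φ hφ a b hab hcon with hpos | hneg
    · rcases hc.lt_or_gt with hcneg | hcpos
      · refine ⟨-1, fun x hx => ?_⟩
        have h1 : 0 < φ x / ((-c) * S x) :=
          div_pos (hpos x hx) (mul_pos (by linarith) (hSpos x hx))
        have h2 : φ x / ((-c) * S x) = -1 * G x := by
          rw [hG]; rw [neg_mul, div_neg]; ring
        linarith [h2 ▸ h1]
      · refine ⟨1, fun x hx => ?_⟩
        have h1 : 0 < φ x / (c * S x) :=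
          div_pos (hpos x hx) (mul_pos hcpos (hSpos x hx))
        simpa [hG] using h1
    · rcases hc.lt_or_gt with hcneg | hcpos
      · refine ⟨1, fun x hx => ?_⟩
        have h1 : 0 < (-φ x) / ((-c) * S x) :=
          div_pos (by linarith [hneg x hx]) (mul_pos (by linarith) (hSpos x hx))
        have h2 : (-φ x) / ((-c) * S x) = 1 * G x := by
          rw [hG]; rw [neg_mul, div_neg, neg_div, neg_neg]; ring
        linarith [h2 ▸ h1]
      · refine ⟨-1, fun x hx => ?_⟩
        have h1 : 0 < (-φ x) / (c * S x) :=
          div_pos (by linarith [hneg x hx]) (mul_pos hcpos (hSpos x hx))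
        have h2 : (-φ x) / (c * S x) = -1 * G x := by
          rw [hG]; rw [neg_div]; ring
        linarith [h2 ▸ h1]
  have hpos : 0 < ∫ x in a..b, ε * G x :=
    intervalIntegral.intervalIntegral_pos_of_pos_on (hGint.const_mul ε) hε hab
  rw [intervalIntegral.integral_const_mul] at hpos
  have hFG : ∫ x in a..b, F x = ∫ x in a..b, G x := by
    apply intervalIntegral.integral_congr_ae
    have hb : ∀ᵐ x : ℝ ∂volume, x ≠ b := by simp [MeasureTheory.ae_iff]
    filter_upwards [hb] with x hxb hxI
    rw [Set.uIoc_of_le hab.le] at hxI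
    exact hF x ⟨hxI.1, lt_of_le_of_ne hxI.2 hxb⟩
  rw [← hFG, hint, mul_zero] at hpos
  exact lt_irrefl 0 hpos

theorem stmt_1
    (g : ℕ) (hg : 1 ≤ g)
    (E : ℕ → ℝ) (hE : ∀ j, j < 2*g+1 → E j < E (j+1))
    (Rhalf : ℂ → ℂ)
    (hRhalf : ∀ z : ℂ, Rhalf z = -∏ j ∈ Finset.range (2*g+2), (z - (E j : ℂ)) ^ ((1:ℂ)/2)) :
    (∀ k, 1 ≤ k → k ≤ g → ∀ x ∈ Set.Ioo (E (2*k-1)) (E (2*k)),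
      (Rhalf (x : ℂ)).im = 0 ∧ Rhalf (x : ℂ) ≠ 0) ∧
    (∀ p : Polynomial ℝ, p.Monic → p.natDegree = g →
      (∀ k, 1 ≤ k → k ≤ g →
        ∫ x in (E (2*k-1))..(E (2*k)), p.eval x / (Rhalf (x : ℂ)).re = 0) →
      ((∀ k, 1 ≤ k → k ≤ g →
          ∃! x : ℝ, x ∈ Set.Ioo (E (2*k-1)) (E (2*k)) ∧ p.IsRoot x) ∧
       (∀ k, 1 ≤ k → k ≤ g → ∀ x ∈ Set.Ioo (E (2*k-1)) (E (2*k)),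
          p.IsRoot x → p.derivative.eval x ≠ 0) ∧
       (∀ z : ℂ, (p.map (algebraMap ℝ ℂ)).IsRoot z → z.im = 0))) := by
  have hlt : ∀ i j, i < j → j ≤ 2*g+1 → E i < E j := by
    have main : ∀ j, j ≤ 2*g+1 → ∀ i, i < j → E i < E j := by
      intro j
      induction j with
      | zero => intro _ i hi; omega
      | succ n ih =>
        intro hj i hi
        rcases Nat.lt_succ_iff_lt_or_eq.1 hi with h | h
        · exact lt_trans (ih (by omega) i h) (hE n (by omega))
        · subst h; exact hE i (by omega)
    exact fun i j hij hj => main j hj i hij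
  have hcne : ∀ k : ℕ, (-(-1:ℝ)^(g+1-k)) ≠ 0 := by
    intro k
    simp
  have hRx : ∀ k, 1 ≤ k → k ≤ g → ∀ x ∈ Set.Ioo (E (2*k-1)) (E (2*k)),
      Rhalf (x:ℂ) = ((((-(-1:ℝ)^(g+1-k)) * ((∏ j ∈ Finset.range (2*k), Real.sqrt (x - E j)) *
          ∏ i ∈ Finset.range (2*g+2-2*k), Real.sqrt (E (2*k+i) - x))) : ℝ) : ℂ) := by
    intro k hk1 hkg x hx
    rw [hRhalf]
    exact gap_formula g k hk1 hkg E hlt x hx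
  have hPpos : ∀ k, 1 ≤ k → k ≤ g → ∀ x ∈ Set.Ioo (E (2*k-1)) (E (2*k)),
      0 < (∏ j ∈ Finset.range (2*k), Real.sqrt (x - E j)) *
          ∏ i ∈ Finset.range (2*g+2-2*k), Real.sqrt (E (2*k+i) - x) := by
    intro k hk1 hkg x hx
    apply mul_pos
    · apply Finset.prod_pos
      intro j hj
      simp only [Finset.mem_range] at hj
      apply Real.sqrt_pos.2
      have hEj : E j < x := by
        rcases eq_or_lt_of_le (Nat.le_of_lt_succ (by omega : j < (2*k-1)+1)) with h | h
        · rw [h]; exact hx.1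
        · exact lt_trans (hlt j (2*k-1) h (by omega)) hx.1
      linarith
    · apply Finset.prod_pos
      intro i hi
      simp only [Finset.mem_range] at hi
      apply Real.sqrt_pos.2
      have hEi : x < E (2*k+i) := by
        rcases Nat.eq_zero_or_pos i with h | h
        · simpa [h] using hx.2
        · exact lt_trans hx.2 (hlt (2*k) (2*k+i) (by omega) (by omega))
      linarith
  constructor
  · intro k hk1 hkg x hx
    rw [hRx k hk1 hkg x hx]
    exact ⟨Complex.ofReal_im _,
      Complex.ofReal_ne_zero.2 (mul_ne_zero (hcne k) (hPpos k hk1 hkg x hx).ne')⟩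
  intro p hmonic hdeg hint
  -- the T functions and factorization
  set T : ℕ → ℝ → ℝ := fun k x => (∏ j ∈ Finset.range (2*k-1), Real.sqrt (x - E j)) *
      ∏ i ∈ Finset.range (2*g+1-2*k), Real.sqrt (E (2*k+(i+1)) - x) with hTdef
  have split1 : ∀ (f : ℕ → ℝ) (n : ℕ), 1 ≤ n →
      ∏ j ∈ Finset.range n, f j = (∏ j ∈ Finset.range (n-1), f j) * f (n-1) := by
    intro f n hn
    obtain ⟨m, rfl⟩ := Nat.exists_eq_succ_of_ne_zero (by omega : n ≠ 0)
    simp [Finset.prod_range_succ]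
  have split2 : ∀ (f : ℕ → ℝ) (n : ℕ), 1 ≤ n →
      ∏ i ∈ Finset.range n, f i = f 0 * ∏ i ∈ Finset.range (n-1), f (i+1) := by
    intro f n hn
    obtain ⟨m, rfl⟩ := Nat.exists_eq_succ_of_ne_zero (by omega : n ≠ 0)
    simp [Finset.prod_range_succ']
    ring
  have hPfac : ∀ k, 1 ≤ k → k ≤ g → ∀ x : ℝ,
      (∏ j ∈ Finset.range (2*k), Real.sqrt (x - E j)) *
        ∏ i ∈ Finset.range (2*g+2-2*k), Real.sqrt (E (2*k+i) - x)
      = Real.sqrt (x - E (2*k-1)) * Real.sqrt (E (2*k) - x) * T k x := by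
    intro k hk1 hkg x
    rw [split1 (fun j => Real.sqrt (x - E j)) (2*k) (by omega),
      split2 (fun i => Real.sqrt (E (2*k+i) - x)) (2*g+2-2*k) (by omega)]
    simp only [hTdef, Nat.add_zero]
    rw [show 2*g+2-2*k-1 = 2*g+1-2*k from by omega]
    ring
  have hTcont : ∀ k, Continuous (T k) := by
    intro k
    apply Continuous.mul
    · apply continuous_finset_prod
      intro j _
      exact Real.continuous_sqrt.comp (continuous_id.sub continuous_const)
    · apply continuous_finset_prod
      intro i _
      exact Real.continuous_sqrt.comp (continuous_const.sub continuous_id)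
  have hTpos : ∀ k, 1 ≤ k → k ≤ g → ∀ x ∈ Set.Icc (E (2*k-1)) (E (2*k)), 0 < T k x := by
    intro k hk1 hkg x hx
    apply mul_pos
    · apply Finset.prod_pos
      intro j hj
      simp only [Finset.mem_range] at hj
      apply Real.sqrt_pos.2
      have : E j < E (2*k-1) := hlt j (2*k-1) (by omega) (by omega)
      have := hx.1
      linarith
    · apply Finset.prod_pos
      intro i hi
      simp only [Finset.mem_range] at hi
      apply Real.sqrt_pos.2
      have : E (2*k) < E (2*k+(i+1)) := hlt (2*k) (2*k+(i+1)) (by omega) (by omega)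
      have := hx.2
      linarith
  have hroots : ∀ k ∈ Finset.Icc 1 g, ∃ x ∈ Set.Ioo (E (2*k-1)) (E (2*k)), p.eval x = 0 := by
    intro k hk
    rw [Finset.mem_Icc] at hk
    obtain ⟨hk1, hkg⟩ := hk
    apply exists_root_in_gap (E (2*k-1)) (E (2*k)) (hlt (2*k-1) (2*k) (by omega) (by omega))
      (-(-1:ℝ)^(g+1-k)) (hcne k) (T k) (hTcont k) (hTpos k hk1 hkg)
      (fun x => p.eval x) (Polynomial.continuous p)
      (fun x => p.eval x / (Rhalf (x:ℂ)).re) _ (hint k hk1 hkg)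
    intro x hx
    show Polynomial.eval x p / (Rhalf (x:ℂ)).re = Polynomial.eval x p /
      (-(-1:ℝ)^(g+1-k) * (Real.sqrt (x - E (2*k-1)) * Real.sqrt (E (2*k) - x) * T k x))
    rw [hRx k hk1 hkg x hx, Complex.ofReal_re, hPfac k hk1 hkg x]
  choose! r hrmem hrroot using hroots
  have hrmem' : ∀ k, 1 ≤ k → k ≤ g → r k ∈ Set.Ioo (E (2*k-1)) (E (2*k)) := by
    intro k hk1 hkg; exact hrmem k (Finset.mem_Icc.2 ⟨hk1, hkg⟩)
  have hsep : ∀ k k', 1 ≤ k → k ≤ g → 1 ≤ k' → k' ≤ g → k < k' → r k < r k' := by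
    intro k k' hk1 hkg hk1' hkg' hkk
    have h1 := (hrmem' k hk1 hkg).2
    have h2 := (hrmem' k' hk1' hkg').1
    have h3 : E (2*k) < E (2*k'-1) := hlt (2*k) (2*k'-1) (by omega) (by omega)
    linarith
  have hinj : ∀ k ∈ Finset.Icc 1 g, ∀ k' ∈ Finset.Icc 1 g, r k = r k' → k = k' := by
    intro k hk k' hk' heq
    rw [Finset.mem_Icc] at hk hk'
    by_contra hne
    rcases Nat.lt_or_ge k k' with h | h
    · have := hsep k k' hk.1 hk.2 hk'.1 hk'.2 h; linarith
    · have := hsep k' k hk'.1 hk'.2 hk.1 hk.2 (by omega); linarith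
  set q : Polynomial ℝ := ∏ k ∈ Finset.Icc 1 g, (Polynomial.X - Polynomial.C (r k)) with hqdef
  have hqmonic : q.Monic :=
    Polynomial.monic_prod_of_monic _ _ (fun k _ => Polynomial.monic_X_sub_C _)
  have hqdeg : q.natDegree = g := by
    rw [hqdef, Polynomial.natDegree_prod _ _ (fun k _ => Polynomial.X_sub_C_ne_zero _)]
    simp [Polynomial.natDegree_X_sub_C, Nat.card_Icc]
  have hqdvd : q ∣ p := by
    apply Finset.prod_dvd_of_coprime
    · intro i hi j hj hij
      exact Polynomial.isCoprime_X_sub_C_of_isUnit_sub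
        (isUnit_iff_ne_zero.2 (sub_ne_zero_of_ne
          (fun h => hij (hinj i (Finset.mem_coe.1 hi) j (Finset.mem_coe.1 hj) h))))
    · intro k hk
      exact Polynomial.dvd_iff_isRoot.2 (hrroot k hk)
  have hpq : p = q :=
    (Polynomial.eq_of_dvd_of_natDegree_le_of_leadingCoeff hqdvd
      (by rw [hdeg, hqdeg]) (by rw [hqmonic.leadingCoeff, hmonic.leadingCoeff])).symm
  have hchar : ∀ y : ℝ, p.IsRoot y → ∃ k ∈ Finset.Icc 1 g, y = r k := by
    intro y hy
    rw [hpq, hqdef] at hy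
    have : ∏ k ∈ Finset.Icc 1 g, (y - r k) = 0 := by
      simpa [Polynomial.IsRoot, Polynomial.eval_prod] using hy
    obtain ⟨k, hk, hk0⟩ := Finset.prod_eq_zero_iff.1 this
    exact ⟨k, hk, by linarith [sub_eq_zero.1 hk0]⟩
  refine ⟨?_, ?_, ?_⟩
  · -- unique root in each gap
    intro k hk1 hkg
    refine ⟨r k, ⟨hrmem' k hk1 hkg, hrroot k (Finset.mem_Icc.2 ⟨hk1, hkg⟩)⟩, ?_⟩
    rintro y ⟨hymem, hyroot⟩
    obtain ⟨k', hk', heq⟩ := hchar y hyroot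
    rw [Finset.mem_Icc] at hk'
    subst heq
    suffices h : k' = k by rw [h]
    by_contra hne
    have hy1 := (hrmem' k' hk'.1 hk'.2).1
    have hy2 := (hrmem' k' hk'.1 hk'.2).2
    rcases Nat.lt_or_ge k' k with h | h
    · have h3 : E (2*k') < E (2*k-1) := hlt (2*k') (2*k-1) (by omega) (by omega)
      have := hymem.1
      linarith
    · have h3 : E (2*k) < E (2*k'-1) := hlt (2*k) (2*k'-1) (by omega) (by omega)
      have := hymem.2
      linarith
  · -- simple roots
    intro k hk1 hkg x hx hroot hder
    have hqsep : q.Separable := by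
      rw [hqdef]
      exact Polynomial.separable_prod_X_sub_C_iff'.2 hinj
    have hpsep : p.Separable := by rw [hpq]; exact hqsep
    obtain ⟨A, B, hAB⟩ := hpsep
    have := congrArg (Polynomial.eval x) hAB
    have h0 : p.eval x = 0 := hroot
    simp [h0, hder] at this
  · -- complex roots are real
    intro z hz
    rw [hpq, hqdef] at hz
    rw [Polynomial.map_prod] at hz
    have hce : ∏ k ∈ Finset.Icc 1 g, (z - ((r k : ℝ) : ℂ)) = 0 := by
      simpa [Polynomial.IsRoot, Polynomial.eval_prod, Polynomial.map_sub,
        Polynomial.map_X, Polynomial.map_C] using hz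
    obtain ⟨k, hk, hk0⟩ := Finset.prod_eq_zero_iff.1 hce
    have hzz : z = ((r k : ℝ) : ℂ) := by rwa [sub_eq_zero] at hk0
    rw [hzz]
    exact Complex.ofReal_im _
end

section
/- Assume the short-range condition. Fix z ∈ ℂ and w ∈ ℂ with 0 < |w| ≤ 1, and suppose either (i) there exist solutions ψ_{q,±} of τ_q u = z u of the form ψ_{q,±}(n) = θ_±(n) w^{±n} with 0 < inf_n |θ_±(n)| ≤ sup_n |θ_±(n)| < ∞ and W_q(ψ_{q,-}, ψ_{q,+}) ≠ 0; or (ii) |w| = 1 and there exists a solution ψ_{q,+} = ψ_{q,-} =: φ of τ_q u = z u with φ(n) = θ(n) w^n, 0 < inf_n |θ(n)| ≤ sup_n |θ(n)| < ∞, together with a second solution φ̂(n) = φ(n)(θ̂(n) + n) with θ̂ bounded and W_q(φ, φ̂) ≠ 0. Then there exist solutions ψ_+ and ψ_- of the perturbed equation τ u = z u such that lim_{n→+∞} |w^{-n}(ψ_+(n) - ψ_{q,+}(n))| = 0 and lim_{n→-∞} |w^{n}(ψ_-(n) - ψ_{q,-}(n))| = 0. -/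
open Filter

noncomputable section Stmt6Aux

/-- backward recursion sequence: value at (n₀ - j, n₀ - j + 1) -/
private noncomputable def bseq (a b : ℤ → ℝ) (z : ℂ) (n₀ : ℤ) (c₀ c₁ : ℂ) : ℕ → ℂ × ℂ
  | 0 => (c₀, c₁)
  | (j+1) => (((z - ((b (n₀ - j) : ℝ) : ℂ)) * (bseq a b z n₀ c₀ c₁ j).1
      - ((a (n₀ - j) : ℝ) : ℂ) * (bseq a b z n₀ c₀ c₁ j).2) / ((a (n₀ - j - 1) : ℝ) : ℂ),
      (bseq a b z n₀ c₀ c₁ j).1)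

private lemma extend_solution (a b : ℤ → ℝ) (ha : ∀ n : ℤ, ((a n : ℝ) : ℂ) ≠ 0) (z : ℂ)
    (n₀ : ℤ) (Ψ : ℤ → ℂ)
    (hΨ : ∀ n : ℤ, n₀ + 1 ≤ n →
      ((a n : ℝ) : ℂ) * Ψ (n+1) + ((a (n-1) : ℝ) : ℂ) * Ψ (n-1) + ((b n : ℝ) : ℂ) * Ψ n
        = z * Ψ n) :
    ∃ ψ : ℤ → ℂ, (∀ n, n₀ ≤ n → ψ n = Ψ n) ∧
      ∀ n : ℤ, ((a n : ℝ) : ℂ) * ψ (n+1) + ((a (n-1) : ℝ) : ℂ) * ψ (n-1)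
        + ((b n : ℝ) : ℂ) * ψ n = z * ψ n := by
  set G : ℕ → ℂ × ℂ := bseq a b z n₀ (Ψ n₀) (Ψ (n₀+1)) with hG
  set ψ : ℤ → ℂ := fun n => if n₀ ≤ n then Ψ n else (G (n₀ - n).toNat).1 with hψ
  have hval : ∀ j : ℕ, ψ (n₀ - j) = (G j).1 := by
    intro j
    cases j with
    | zero => simp [hψ, hG, bseq]
    | succ j =>
      have hlt : ¬ (n₀ ≤ n₀ - ((j:ℕ)+1 : ℕ)) := by push_cast; omega
      have e : n₀ - (n₀ - ((j+1 : ℕ) : ℤ)) = ((j+1 : ℕ) : ℤ) := by ring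
      simp only [hψ, if_neg hlt]
      rw [e, Int.toNat_natCast]
  have hval2 : ∀ j : ℕ, ψ (n₀ - j + 1) = (G j).2 := by
    intro j
    cases j with
    | zero => simp [hψ, hG, bseq]
    | succ j =>
      have e : n₀ - ((j+1 : ℕ) : ℤ) + 1 = n₀ - (j : ℤ) := by push_cast; ring
      rw [e, hval j]
      rfl
  refine ⟨ψ, fun n hn => by simp [hψ, if_pos hn], fun n => ?_⟩
  rcases le_or_gt (n₀ + 1) n with hn | hn
  · have h1 : ψ (n+1) = Ψ (n+1) := by simp [hψ, if_pos (by omega : n₀ ≤ n + 1)]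
    have h2 : ψ (n-1) = Ψ (n-1) := by simp [hψ, if_pos (by omega : n₀ ≤ n - 1)]
    have h3 : ψ n = Ψ n := by simp [hψ, if_pos (by omega : n₀ ≤ n)]
    rw [h1, h2, h3]; exact hΨ n hn
  · -- n ≤ n₀
    obtain ⟨j, hjz⟩ : ∃ j : ℕ, (j : ℤ) = n₀ - n :=
      ⟨(n₀ - n).toNat, Int.toNat_of_nonneg (by omega)⟩
    have e : n = n₀ - (j : ℤ) := by omega
    subst e
    have h1 : ψ (n₀ - (j:ℤ) + 1) = (G j).2 := hval2 j
    have h3 : ψ (n₀ - (j:ℤ)) = (G j).1 := hval j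
    have h2 : ψ (n₀ - (j:ℤ) - 1) = (G (j+1)).1 := by
      rw [show n₀ - (j:ℤ) - 1 = n₀ - ((j+1 : ℕ) : ℤ) from by push_cast; ring]
      exact hval (j+1)
    rw [h1, h2, h3]
    have hrec : (G (j+1)).1 = ((z - ((b (n₀ - j) : ℝ) : ℂ)) * (G j).1
        - ((a (n₀ - j) : ℝ) : ℂ) * (G j).2) / ((a (n₀ - j - 1) : ℝ) : ℂ) := rfl
    rw [hrec, mul_div_cancel₀ _ (ha (n₀ - j - 1))]
    ring

private lemma wronskian_const (aq bq : ℤ → ℝ) (z : ℂ) (u v : ℤ → ℂ)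
    (hu : ∀ n : ℤ, ((aq n : ℝ) : ℂ) * u (n+1) + ((aq (n-1) : ℝ) : ℂ) * u (n-1)
      + ((bq n : ℝ) : ℂ) * u n = z * u n)
    (hv : ∀ n : ℤ, ((aq n : ℝ) : ℂ) * v (n+1) + ((aq (n-1) : ℝ) : ℂ) * v (n-1)
      + ((bq n : ℝ) : ℂ) * v n = z * v n) :
    ∀ n : ℤ, ((aq n : ℝ) : ℂ) * (u n * v (n+1) - u (n+1) * v n)
      = ((aq 0 : ℝ) : ℂ) * (u 0 * v 1 - u 1 * v 0) := by
  have step : ∀ n : ℤ, ((aq n : ℝ) : ℂ) * (u n * v (n+1) - u (n+1) * v n)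
      = ((aq (n-1) : ℝ) : ℂ) * (u (n-1) * v n - u n * v (n-1)) := by
    intro n
    have h1 := hu n
    have h2 := hv n
    linear_combination u n * h2 - v n * h1
  intro n
  induction n using Int.induction_on with
  | zero => rfl
  | succ k ih =>
    have := step ((k : ℤ) + 1)
    rw [show ((k:ℤ) + 1 - 1 : ℤ) = (k : ℤ) from by ring] at this
    rw [this]; exact ih
  | pred k ih =>
    have := step (-(k : ℤ))
    rw [show (-(k:ℤ) - 1 + 1 : ℤ) = -(k:ℤ) from by ring]
    rw [← this]
    exact ih

noncomputable section

private def cc (a aq b bq : ℤ → ℝ) (m : ℤ) : ℝ :=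
  |a m - aq m| + |a (m-1) - aq (m-1)| + |b m - bq m|

private def hh (a aq b bq : ℤ → ℝ) (m : ℤ) : ℝ := (1 + |(m : ℝ)|) * cc a aq b bq m

private lemma cc_nonneg (a aq b bq : ℤ → ℝ) (m : ℤ) : 0 ≤ cc a aq b bq m := by
  unfold cc; positivity

private lemma hh_nonneg (a aq b bq : ℤ → ℝ) (m : ℤ) : 0 ≤ hh a aq b bq m := by
  unfold hh cc; positivity

private lemma hh_summable {a aq b bq : ℤ → ℝ}
    (hshort : Summable (fun n : ℤ => (1 + |(n : ℝ)|) * (|a n - aq n| + |b n - bq n|))) :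
    Summable (hh a aq b bq) := by
  set f : ℤ → ℝ := fun n => (1 + |(n : ℝ)|) * (|a n - aq n| + |b n - bq n|) with hf
  have hf0 : ∀ n, 0 ≤ f n := by intro n; simp only [hf]; positivity
  have hsum2 : Summable (fun n : ℤ => f n + 2 * f (n - 1)) := by
    refine hshort.add (Summable.mul_left 2 ?_)
    exact hshort.comp_injective (fun x y hxy => by omega)
  refine hsum2.of_nonneg_of_le (hh_nonneg a aq b bq) (fun m => ?_)
  have habs : |(m : ℝ)| ≤ |(m:ℝ) - 1| + 1 := by
    have h := abs_sub_abs_le_abs_sub (m:ℝ) ((m:ℝ)-1)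
    have h2 : |(m:ℝ) - ((m:ℝ)-1)| = 1 := by norm_num
    linarith
  have h1 : (1 + |(m:ℝ)|) * |a (m-1) - aq (m-1)| ≤ 2 * f (m-1) := by
    simp only [hf]
    have h2 : (1 + |(m:ℝ)|) ≤ 2 * (1 + |((m - 1 : ℤ) : ℝ)|) := by
      push_cast at habs ⊢; nlinarith [abs_nonneg ((m:ℝ) - 1)]
    have h3 : |a (m-1) - aq (m-1)| ≤ |a (m-1) - aq (m-1)| + |b (m-1) - bq (m-1)| := by
      nlinarith [abs_nonneg (b (m-1) - bq (m-1))]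
    calc (1 + |(m:ℝ)|) * |a (m-1) - aq (m-1)|
        ≤ (2 * (1 + |((m - 1 : ℤ) : ℝ)|)) * (|a (m-1) - aq (m-1)| + |b (m-1) - bq (m-1)|) := by
          apply mul_le_mul h2 h3 (abs_nonneg _) (by positivity)
      _ = 2 * f (m-1) := by simp [hf]; ring
  have h0 : (1 + |(m:ℝ)|) * (|a m - aq m| + |b m - bq m|) = f m := rfl
  unfold hh cc
  nlinarith [abs_nonneg ((m:ℝ)), h1, abs_nonneg (a m - aq m), abs_nonneg (b m - bq m)]

private lemma tail_summable_real {c : ℤ → ℝ} (hc : Summable c) (n : ℤ) :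
    Summable (fun k : ℕ => c (n + 1 + (k : ℤ))) :=
  hc.comp_injective (fun x y hxy => by omega)

private def Sh (a aq b bq : ℤ → ℝ) (n : ℤ) : ℝ := ∑' k : ℕ, hh a aq b bq (n + 1 + (k : ℤ))

private lemma Sh_nonneg (a aq b bq : ℤ → ℝ) (n : ℤ) : 0 ≤ Sh a aq b bq n :=
  tsum_nonneg (fun k => hh_nonneg a aq b bq _)

private lemma Sh_rec {a aq b bq : ℤ → ℝ}
    (hsum : Summable (hh a aq b bq)) (n : ℤ) :
    Sh a aq b bq n = hh a aq b bq (n+1) + Sh a aq b bq (n+1) := by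
  unfold Sh
  rw [Summable.tsum_eq_zero_add (tail_summable_real hsum n)]
  congr 1
  · norm_num
  · apply tsum_congr; intro k; congr 1; push_cast; ring

private lemma Sh_antitone {a aq b bq : ℤ → ℝ} (hsum : Summable (hh a aq b bq)) :
    Antitone (Sh a aq b bq) := by
  apply antitone_int_of_succ_le
  intro n
  rw [Sh_rec hsum n]
  have := hh_nonneg a aq b bq (n+1)
  linarith

private lemma Sh_tendsto {a aq b bq : ℤ → ℝ} (hsum : Summable (hh a aq b bq)) :
    Tendsto (Sh a aq b bq) atTop (nhds 0) := by
  rw [Metric.tendsto_atTop]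
  intro ε hε
  obtain ⟨s, hs⟩ := summable_iff_vanishing.mp hsum (Metric.ball 0 (ε/2))
    (Metric.ball_mem_nhds _ (by positivity))
  obtain ⟨N, hN⟩ := s.exists_le
  refine ⟨N, fun n hn => ?_⟩
  have key : Sh a aq b bq n ≤ ε/2 := by
    apply Real.tsum_le_of_sum_range_le (fun k => hh_nonneg a aq b bq _)
    intro K
    have hdisj : Disjoint ((Finset.range K).image (fun k : ℕ => n + 1 + (k:ℤ))) s := by
      rw [Finset.disjoint_left]
      intro x hx hxs
      simp only [Finset.mem_image, Finset.mem_range] at hx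
      obtain ⟨k, _, rfl⟩ := hx
      have := hN _ hxs
      omega
    have hmem := hs _ hdisj
    rw [Finset.sum_image (by intro x _ y _ hxy; exact Nat.cast_injective (R := ℤ) (add_left_cancel hxy))] at hmem
    have habs : |∑ k ∈ Finset.range K, hh a aq b bq (n+1+(k:ℤ))| < ε/2 := by
      simpa [Real.dist_eq] using hmem
    exact le_of_lt (lt_of_le_of_lt (le_abs_self _) habs)
  rw [Real.dist_eq, sub_zero, abs_of_nonneg (Sh_nonneg a aq b bq n)]
  linarith

private def gg (a aq b bq : ℤ → ℝ) (w : ℂ) (φ : ℤ → ℂ) (m : ℤ) : ℂ :=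
  ((a m - aq m : ℝ) : ℂ) * w ^ (m+1) * φ (m+1)
  + ((a (m-1) - aq (m-1) : ℝ) : ℂ) * w ^ (m-1) * φ (m-1)
  + ((b m - bq m : ℝ) : ℂ) * w ^ m * φ m

private def PP (a aq b bq : ℤ → ℝ) (w W : ℂ) (v φ : ℤ → ℂ) (m : ℤ) : ℂ :=
  v m * gg a aq b bq w φ m / W

private def AA (a aq b bq : ℤ → ℝ) (w W : ℂ) (v φ : ℤ → ℂ) (n : ℤ) : ℂ :=
  ∑' k : ℕ, PP a aq b bq w W v φ (n + 1 + (k : ℤ))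

private def Psi (a aq b bq : ℤ → ℝ) (w W : ℂ) (u v φ : ℤ → ℂ) (n : ℤ) : ℂ :=
  u n * (1 - AA a aq b bq w W v φ n) + v n * AA a aq b bq w W u φ n

private lemma tail_summable_cx {f : ℤ → ℂ} {c : ℤ → ℝ} (hc : Summable c)
    (hf : ∀ m : ℤ, 1 ≤ m → ‖f m‖ ≤ c m) (n : ℤ) :
    Summable (fun k : ℕ => f (n + 1 + (k : ℤ))) := by
  set K : ℕ := (max 0 (-n)).toNat with hK
  have hKz : (K : ℤ) = max 0 (-n) := Int.toNat_of_nonneg (le_max_left _ _)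
  rw [← summable_nat_add_iff K]
  apply Summable.of_norm_bounded (tail_summable_real hc (n + K))
  intro k
  have e : n + 1 + ((k + K : ℕ) : ℤ) = (n + K) + 1 + (k : ℤ) := by push_cast; ring
  rw [e]
  exact hf _ (by omega)
private lemma key (a aq b bq : ℤ → ℝ) (ha : ∀ n, 0 < a n)
    (hshort : Summable (fun n : ℤ => (1 + |(n : ℝ)|) * (|a n - aq n| + |b n - bq n|)))
    (z w : ℂ) (hw0 : 0 < ‖w‖) (hw1 : ‖w‖ ≤ 1)
    (u v : ℤ → ℂ)
    (hu : ∀ n : ℤ, (aq n : ℂ) * u (n+1) + (aq (n-1) : ℂ) * u (n-1) + (bq n : ℂ) * u n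
      = z * u n)
    (hv : ∀ n : ℤ, (aq n : ℂ) * v (n+1) + (aq (n-1) : ℂ) * v (n-1) + (bq n : ℂ) * v n
      = z * v n)
    (hWne : (aq 0 : ℂ) * (u 0 * v 1 - u 1 * v 0) ≠ 0)
    (D : ℝ)
    (hu_bd : ∀ n : ℤ, 0 ≤ n → ‖u n‖ ≤ D * ‖w‖ ^ n)
    (hv_bd : ∀ m : ℤ, 0 ≤ m → ‖v m‖ ≤ D * (1 + (m:ℝ)) * ‖w‖ ^ (-m)) :
    ∃ ψ : ℤ → ℂ,
      (∀ n : ℤ, (a n : ℂ) * ψ (n+1) + (a (n-1) : ℂ) * ψ (n-1) + (b n : ℂ) * ψ n = z * ψ n) ∧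
      Tendsto (fun n : ℤ => ‖w ^ (-n) * (ψ n - u n)‖) atTop (nhds 0) := by
  set r : ℝ := ‖w‖ with hrdef
  set W : ℂ := (aq 0 : ℂ) * (u 0 * v 1 - u 1 * v 0) with hWdef
  have hrne : r ≠ 0 := ne_of_gt hw0
  have hwne : w ≠ 0 := by
    intro h; exact hrne (by rw [hrdef, h, norm_zero])
  have hWabs : 0 < ‖W‖ := norm_pos_iff.mpr hWne
  have hD0 : 0 ≤ D := by
    have h := hu_bd 0 le_rfl
    rw [zpow_zero, mul_one] at h
    exact le_trans (norm_nonneg _) h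
  -- Wronskian
  have hWr : ∀ n : ℤ, (aq (n-1) : ℂ) * (u (n-1) * v n - u n * v (n-1)) = W := by
    intro n
    have h := wronskian_const aq bq z u v hu hv (n-1)
    rw [show (n - 1 + 1 : ℤ) = n from by ring] at h
    exact h
  -- both u and v satisfy the v-type bound for nonneg index
  have hzanti : ∀ m n : ℤ, m ≤ n → r ^ n ≤ r ^ m :=
    fun m n h => zpow_le_zpow_right_of_le_one₀ hw0 hw1 h
  have hzpos : ∀ m : ℤ, 0 < r ^ m := fun m => zpow_pos hw0 m
  have hu_bd' : ∀ m : ℤ, 0 ≤ m → ‖u m‖ ≤ D * (1 + (m:ℝ)) * r ^ (-m) := by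
    intro m hm
    refine (hu_bd m hm).trans ?_
    have h1 : r ^ m ≤ r ^ (-m) := hzanti (-m) m (by omega)
    have h2 : (1:ℝ) ≤ 1 + (m:ℝ) := by
      have : (0:ℝ) ≤ (m:ℝ) := by exact_mod_cast hm
      linarith
    calc D * r ^ m ≤ D * r ^ (-m) := by
          apply mul_le_mul_of_nonneg_left h1 hD0
      _ = D * 1 * r ^ (-m) := by ring
      _ ≤ D * (1 + (m:ℝ)) * r ^ (-m) := by
          apply mul_le_mul_of_nonneg_right _ (le_of_lt (hzpos _))
          apply mul_le_mul_of_nonneg_left h2 hD0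
  -- bound on gg
  have hgg_bd : ∀ (φ : ℤ → ℂ) (M : ℝ), 0 ≤ M → (∀ n, ‖φ n‖ ≤ M) → ∀ m : ℤ,
      ‖gg a aq b bq w φ m‖ ≤ M * cc a aq b bq m * r ^ (m-1) := by
    intro φ M hM0 hφ m
    have hz1 : r ^ (m+1) ≤ r ^ (m-1) := hzanti (m-1) (m+1) (by omega)
    have hz2 : r ^ m ≤ r ^ (m-1) := hzanti (m-1) m (by omega)
    have e1 : ‖((a m - aq m : ℝ) : ℂ) * w ^ (m+1) * φ (m+1)‖
        ≤ |a m - aq m| * r ^ (m-1) * M := by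
      rw [norm_mul, norm_mul, Complex.norm_real, Real.norm_eq_abs, norm_zpow]
      gcongr <;> exact hφ _
    have e2 : ‖((a (m-1) - aq (m-1) : ℝ) : ℂ) * w ^ (m-1) * φ (m-1)‖
        ≤ |a (m-1) - aq (m-1)| * r ^ (m-1) * M := by
      rw [norm_mul, norm_mul, Complex.norm_real, Real.norm_eq_abs, norm_zpow]
      gcongr <;> exact hφ _
    have e3 : ‖((b m - bq m : ℝ) : ℂ) * w ^ m * φ m‖
        ≤ |b m - bq m| * r ^ (m-1) * M := by
      rw [norm_mul, norm_mul, Complex.norm_real, Real.norm_eq_abs, norm_zpow]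
      gcongr <;> exact hφ _
    calc ‖gg a aq b bq w φ m‖
        ≤ ‖((a m - aq m : ℝ) : ℂ) * w ^ (m+1) * φ (m+1)‖
          + ‖((a (m-1) - aq (m-1) : ℝ) : ℂ) * w ^ (m-1) * φ (m-1)‖
          + ‖((b m - bq m : ℝ) : ℂ) * w ^ m * φ m‖ := by
            unfold gg
            exact (norm_add_le _ _).trans (add_le_add_left (norm_add_le _ _) _)
      _ ≤ |a m - aq m| * r ^ (m-1) * M + |a (m-1) - aq (m-1)| * r ^ (m-1) * M
          + |b m - bq m| * r ^ (m-1) * M := by linarith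
      _ = M * cc a aq b bq m * r ^ (m-1) := by unfold cc; ring
  -- bound on PP with a weight x of v-type
  set EP : ℝ := D / (‖W‖ * r) with hEPdef
  have hEP0 : 0 ≤ EP := by positivity
  have hPP_bd : ∀ (x : ℤ → ℂ), (∀ m : ℤ, 0 ≤ m → ‖x m‖ ≤ D * (1 + (m:ℝ)) * r ^ (-m)) →
      ∀ (φ : ℤ → ℂ) (M : ℝ), 0 ≤ M → (∀ n, ‖φ n‖ ≤ M) → ∀ m : ℤ, 1 ≤ m →
      ‖PP a aq b bq w W x φ m‖ ≤ EP * M * hh a aq b bq m := by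
    intro x hx φ M hM0 hφ m hm
    have hmr : |(m:ℝ)| = (m:ℝ) := abs_of_nonneg (by exact_mod_cast (by omega : (0:ℤ) ≤ m))
    have hcol : r ^ (-m) * r ^ (m-1) = r⁻¹ := by
      rw [← zpow_add₀ hrne, show (-m + (m-1) : ℤ) = -1 from by ring, zpow_neg_one]
    unfold PP
    rw [norm_div, norm_mul]
    calc ‖x m‖ * ‖gg a aq b bq w φ m‖ / ‖W‖
        ≤ (D * (1 + (m:ℝ)) * r ^ (-m)) * (M * cc a aq b bq m * r ^ (m-1)) / ‖W‖ := by
          gcongr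
          · exact hx m (by omega)
          · exact hgg_bd φ M hM0 hφ m
      _ = (D * (1 + (m:ℝ))) * (M * cc a aq b bq m) * (r ^ (-m) * r ^ (m-1)) / ‖W‖ := by
          ring
      _ = (D * (1 + (m:ℝ))) * (M * cc a aq b bq m) * r⁻¹ / ‖W‖ := by rw [hcol]
      _ = EP * M * hh a aq b bq m := by
          rw [hEPdef]; unfold hh; rw [hmr]; field_simp
  -- kernel summand estimate
  set E : ℝ := 2 * D^2 / (‖W‖ * r) with hEdef
  have hE0 : 0 ≤ E := by positivity
  have hker : ∀ (φ : ℤ → ℂ) (M : ℝ), 0 ≤ M → (∀ n, ‖φ n‖ ≤ M) →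
      ∀ (N m : ℤ), 0 ≤ N → N + 1 ≤ m →
      ‖w ^ (-N) * (u N * PP a aq b bq w W v φ m - v N * PP a aq b bq w W u φ m)‖
        ≤ E * M * hh a aq b bq m := by
    intro φ M hM0 hφ N m hN hNm
    have hmr : |(m:ℝ)| = (m:ℝ) := abs_of_nonneg (by exact_mod_cast (by omega : (0:ℤ) ≤ m))
    have hNR : (0:ℝ) ≤ (N:ℝ) := by exact_mod_cast hN
    have hmR : (N:ℝ) + 1 ≤ (m:ℝ) := by exact_mod_cast hNm
    have e : u N * PP a aq b bq w W v φ m - v N * PP a aq b bq w W u φ m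
        = (u N * v m - v N * u m) * gg a aq b bq w φ m / W := by
      unfold PP; ring
    rw [e, norm_mul, norm_div, norm_mul, norm_zpow]
    have hkernel : ‖u N * v m - v N * u m‖
        ≤ 2 * D^2 * (1 + (m:ℝ)) * r ^ (N - m) := by
      have t1 : ‖u N * v m‖ ≤ D^2 * (1 + (m:ℝ)) * r ^ (N - m) := by
        rw [norm_mul]
        calc ‖u N‖ * ‖v m‖
            ≤ (D * r ^ N) * (D * (1 + (m:ℝ)) * r ^ (-m)) := by
              gcongr
              · exact hu_bd N hN
              · exact hv_bd m (by omega)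
          _ = D^2 * (1 + (m:ℝ)) * (r ^ N * r ^ (-m)) := by ring
          _ = D^2 * (1 + (m:ℝ)) * r ^ (N - m) := by
              rw [← zpow_add₀ hrne, show (N + -m : ℤ) = N - m from by ring]
      have t2 : ‖v N * u m‖ ≤ D^2 * (1 + (m:ℝ)) * r ^ (N - m) := by
        rw [norm_mul]
        calc ‖v N‖ * ‖u m‖
            ≤ (D * (1 + (N:ℝ)) * r ^ (-N)) * (D * r ^ m) := by
              gcongr
              · exact hv_bd N hN
              · exact hu_bd m (by omega)
          _ = D^2 * (1 + (N:ℝ)) * (r ^ (-N) * r ^ m) := by ring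
          _ = D^2 * (1 + (N:ℝ)) * r ^ (m - N) := by
              rw [← zpow_add₀ hrne, show (-N + m : ℤ) = m - N from by ring]
          _ ≤ D^2 * (1 + (m:ℝ)) * r ^ (N - m) := by
              have h1 : r ^ (m-N) ≤ r ^ (N-m) := hzanti (N-m) (m-N) (by omega)
              have h2 : (1:ℝ) + (N:ℝ) ≤ 1 + (m:ℝ) := by linarith
              have hpos : (0:ℝ) ≤ D^2 * (1 + (m:ℝ)) := by nlinarith [sq_nonneg D]
              calc D^2 * (1 + (N:ℝ)) * r ^ (m-N)
                  ≤ D^2 * (1 + (m:ℝ)) * r ^ (m-N) := by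
                    apply mul_le_mul_of_nonneg_right _ (le_of_lt (hzpos _))
                    nlinarith [sq_nonneg D]
                _ ≤ D^2 * (1 + (m:ℝ)) * r ^ (N-m) := mul_le_mul_of_nonneg_left h1 hpos
      calc ‖u N * v m - v N * u m‖
          ≤ ‖u N * v m‖ + ‖v N * u m‖ := by
            exact norm_sub_le _ _
        _ ≤ 2 * D^2 * (1 + (m:ℝ)) * r ^ (N - m) := by linarith
    have hcol : r ^ (-N) * (r ^ (N-m) * r ^ (m-1)) = r⁻¹ := by
      rw [← zpow_add₀ hrne, ← zpow_add₀ hrne,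
        show (-N + (N - m + (m-1)) : ℤ) = -1 from by ring, zpow_neg_one]
    have hm1 : (0:ℝ) ≤ 1 + (m:ℝ) := by linarith
    have hpos2 : (0:ℝ) ≤ 2 * D ^ 2 * (1 + (m:ℝ)) * r ^ (N - m) :=
      mul_nonneg (mul_nonneg (by positivity) hm1) (hzpos (N-m)).le
    calc r ^ (-N) * (‖u N * v m - v N * u m‖ * ‖gg a aq b bq w φ m‖
          / ‖W‖)
        ≤ r ^ (-N) * ((2 * D^2 * (1 + (m:ℝ)) * r ^ (N - m))
            * (M * cc a aq b bq m * r ^ (m-1)) / ‖W‖) := by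
          gcongr <;> first
            | exact hkernel
            | exact hgg_bd φ M hM0 hφ m
            | exact hpos2
            | positivity
      _ = (2 * D^2 * (1 + (m:ℝ))) * (M * cc a aq b bq m)
            * (r ^ (-N) * (r ^ (N-m) * r ^ (m-1))) / ‖W‖ := by ring
      _ = (2 * D^2 * (1 + (m:ℝ))) * (M * cc a aq b bq m) * r⁻¹ / ‖W‖ := by rw [hcol]
      _ = E * M * hh a aq b bq m := by
          rw [hEdef]; unfold hh; rw [hmr]; field_simp
  -- summability of hh and tails of PP
  have hhsum : Summable (hh a aq b bq) := hh_summable hshort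
  have htailP : ∀ (x : ℤ → ℂ), (∀ m : ℤ, 0 ≤ m → ‖x m‖ ≤ D * (1 + (m:ℝ)) * r ^ (-m)) →
      ∀ (φ : ℤ → ℂ) (M : ℝ), 0 ≤ M → (∀ n, ‖φ n‖ ≤ M) → ∀ n : ℤ,
      Summable (fun k : ℕ => PP a aq b bq w W x φ (n + 1 + (k : ℤ))) := by
    intro x hx φ M hM0 hφ n
    exact tail_summable_cx (c := fun m => EP * M * hh a aq b bq m) ((hhsum.mul_left (EP * M)))
      (fun m hm => hPP_bd x hx φ M hM0 hφ m hm) n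
  -- recurrence for AA
  have hAArec : ∀ (x : ℤ → ℂ), (∀ m : ℤ, 0 ≤ m → ‖x m‖ ≤ D * (1 + (m:ℝ)) * r ^ (-m)) →
      ∀ (φ : ℤ → ℂ) (M : ℝ), 0 ≤ M → (∀ n, ‖φ n‖ ≤ M) → ∀ n : ℤ,
      AA a aq b bq w W x φ n = PP a aq b bq w W x φ (n+1) + AA a aq b bq w W x φ (n+1) := by
    intro x hx φ M hM0 hφ n
    unfold AA
    rw [Summable.tsum_eq_zero_add (htailP x hx φ M hM0 hφ n)]
    congr 1
    · norm_num
    · apply tsum_congr; intro k; congr 1; push_cast; ring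
  -- bound for the weighted tail sums
  have hAAbd : ∀ (φ : ℤ → ℂ) (M : ℝ), 0 ≤ M → (∀ n, ‖φ n‖ ≤ M) →
      ∀ N : ℤ, 0 ≤ N →
      ‖w ^ (-N) * (u N * AA a aq b bq w W v φ N - v N * AA a aq b bq w W u φ N)‖
        ≤ E * M * Sh a aq b bq N := by
    intro φ M hM0 hφ N hN
    have hsv := htailP v hv_bd φ M hM0 hφ N
    have hsu := htailP u hu_bd' φ M hM0 hφ N
    have e1 : w ^ (-N) * (u N * AA a aq b bq w W v φ N - v N * AA a aq b bq w W u φ N)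
        = ∑' k : ℕ, w ^ (-N) * (u N * PP a aq b bq w W v φ (N + 1 + (k:ℤ))
          - v N * PP a aq b bq w W u φ (N + 1 + (k:ℤ))) := by
      unfold AA
      rw [← tsum_mul_left, ← tsum_mul_left, ← Summable.tsum_sub (hsv.mul_left _) (hsu.mul_left _),
        ← tsum_mul_left]
    rw [e1]
    have hbd : ∀ k : ℕ, ‖w ^ (-N) * (u N * PP a aq b bq w W v φ (N + 1 + (k:ℤ))
        - v N * PP a aq b bq w W u φ (N + 1 + (k:ℤ)))‖ ≤ E * M * hh a aq b bq (N + 1 + (k:ℤ)) := by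
      intro k
      exact hker φ M hM0 hφ N (N + 1 + (k:ℤ)) hN (by omega)
    have hsum2 : Summable (fun k : ℕ => E * M * hh a aq b bq (N + 1 + (k:ℤ))) :=
      (tail_summable_real hhsum N).mul_left (E * M)
    calc ‖∑' k : ℕ, w ^ (-N) * (u N * PP a aq b bq w W v φ (N + 1 + (k:ℤ))
          - v N * PP a aq b bq w W u φ (N + 1 + (k:ℤ)))‖
        = ‖∑' k : ℕ, w ^ (-N) * (u N * PP a aq b bq w W v φ (N + 1 + (k:ℤ))
          - v N * PP a aq b bq w W u φ (N + 1 + (k:ℤ)))‖ := rfl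
      _ ≤ ∑' k : ℕ, ‖w ^ (-N) * (u N * PP a aq b bq w W v φ (N + 1 + (k:ℤ))
          - v N * PP a aq b bq w W u φ (N + 1 + (k:ℤ)))‖ := by
          apply norm_tsum_le_tsum_norm
          exact Summable.of_nonneg_of_le (fun k => norm_nonneg _) hbd hsum2
      _ ≤ ∑' k : ℕ, E * M * hh a aq b bq (N + 1 + (k:ℤ)) := by
          apply Summable.tsum_le_tsum hbd _ hsum2
          exact Summable.of_nonneg_of_le (fun k => norm_nonneg _) hbd hsum2
      _ = E * M * Sh a aq b bq N := by rw [tsum_mul_left]; rfl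
  -- choice of n₀
  obtain ⟨n₁, hn₁⟩ : ∃ n₁ : ℤ, ∀ n ≥ n₁, Sh a aq b bq n < 1 / (2 * (E + 1)) := by
    have ht := Sh_tendsto (a := a) (aq := aq) (b := b) (bq := bq) hhsum
    rw [Metric.tendsto_atTop] at ht
    obtain ⟨n₁, hn₁⟩ := ht (1 / (2 * (E + 1))) (by positivity)
    refine ⟨n₁, fun n hn => ?_⟩
    have := hn₁ n hn
    rw [Real.dist_eq, sub_zero, abs_of_nonneg (Sh_nonneg a aq b bq n)] at this
    exact this
  set n₀ : ℤ := max n₁ 0 with hn₀def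
  have hn₀0 : (0:ℤ) ≤ n₀ := le_max_right _ _
  have hhalf : E * Sh a aq b bq n₀ ≤ 1 / 2 := by
    have h1 : Sh a aq b bq n₀ < 1 / (2 * (E + 1)) := hn₁ n₀ (le_max_left _ _)
    have h2 : 0 ≤ Sh a aq b bq n₀ := Sh_nonneg a aq b bq n₀
    have h3 : E * Sh a aq b bq n₀ ≤ E * (1 / (2 * (E + 1))) :=
      mul_le_mul_of_nonneg_left (le_of_lt h1) hE0
    have h4 : E * (1 / (2 * (E + 1))) ≤ 1 / 2 := by
      rw [mul_one_div, div_le_div_iff₀ (by positivity) (by norm_num)]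
      linarith
    linarith
  -- the operator on bounded functions
  have hφbd : ∀ φ : BoundedContinuousFunction ℤ ℂ, ∀ n : ℤ, ‖φ n‖ ≤ ‖φ‖ := by
    intro φ n
    exact BoundedContinuousFunction.norm_coe_le_norm φ n
  have hwA : ∀ (φ : ℤ → ℂ) (M : ℝ), 0 ≤ M → (∀ n, ‖φ n‖ ≤ M) → ∀ n : ℤ,
      ‖w ^ (-(max n n₀)) * Psi a aq b bq w W u v φ (max n n₀)‖
        ≤ D + E * M * Sh a aq b bq n₀ := by
    intro φ M hM0 hφ n
    set N := max n n₀ with hNd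
    have hN0 : (0:ℤ) ≤ N := le_trans hn₀0 (le_max_right _ _)
    have e : w ^ (-N) * Psi a aq b bq w W u v φ N
        = w ^ (-N) * u N - w ^ (-N) * (u N * AA a aq b bq w W v φ N
            - v N * AA a aq b bq w W u φ N) := by
      unfold Psi; ring
    rw [e]
    have h1 : ‖w ^ (-N) * u N‖ ≤ D := by
      rw [norm_mul, norm_zpow]
      calc r ^ (-N) * ‖u N‖ ≤ r ^ (-N) * (D * r ^ N) := by
            exact mul_le_mul_of_nonneg_left (hu_bd N hN0) (hzpos _).le
        _ = D * (r ^ (-N) * r ^ N) := by ring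
        _ = D := by rw [← zpow_add₀ hrne]; norm_num
    have h2 := hAAbd φ M hM0 hφ N hN0
    have h3 : E * M * Sh a aq b bq N ≤ E * M * Sh a aq b bq n₀ :=
      mul_le_mul_of_nonneg_left (Sh_antitone hhsum (le_max_right _ _)) (by positivity)
    refine le_trans (norm_sub_le _ _) ?_
    linarith
  have hTex : ∀ φ : BoundedContinuousFunction ℤ ℂ, ∃ Tφ : BoundedContinuousFunction ℤ ℂ,
      ∀ n : ℤ, Tφ n = w ^ (-(max n n₀)) * Psi a aq b bq w W u v (⇑φ) (max n n₀) := by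
    intro φ
    refine ⟨BoundedContinuousFunction.ofNormedAddCommGroup
      (fun n => w ^ (-(max n n₀)) * Psi a aq b bq w W u v (⇑φ) (max n n₀))
      continuous_of_discreteTopology (D + E * ‖φ‖ * Sh a aq b bq n₀) ?_, fun n => rfl⟩
    intro n
    exact hwA (⇑φ) ‖φ‖ (norm_nonneg φ) (hφbd φ) n
  choose T hT using hTex
  -- contraction
  have hcontr : ContractingWith (1/2 : NNReal) T := by
    constructor
    · rw [← NNReal.coe_lt_coe]; norm_num
    · apply LipschitzWith.of_dist_le_mul
      intro φ χ
      have hdist0 : (0:ℝ) ≤ dist φ χ := dist_nonneg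
      have hhalfc : (((1:NNReal)/2 : NNReal) : ℝ) = 1/2 := by norm_num
      rw [BoundedContinuousFunction.dist_le (by rw [hhalfc]; positivity)]
      intro n
      set N := max n n₀ with hNd
      have hN0 : (0:ℤ) ≤ N := le_trans hn₀0 (le_max_right _ _)
      set δ : ℤ → ℂ := fun m => φ m - χ m with hδ
      have hδbd : ∀ m : ℤ, ‖δ m‖ ≤ dist φ χ := by
        intro m
        rw [hδ]
        calc ‖φ m - χ m‖ = dist (φ m) (χ m) := (dist_eq_norm _ _).symm
          _ ≤ dist φ χ := BoundedContinuousFunction.dist_coe_le_dist m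
      have hsubA : ∀ (x : ℤ → ℂ),
          (∀ m : ℤ, 0 ≤ m → ‖x m‖ ≤ D * (1 + (m:ℝ)) * r ^ (-m)) →
          AA a aq b bq w W x (⇑φ) N - AA a aq b bq w W x (⇑χ) N = AA a aq b bq w W x δ N := by
        intro x hx
        unfold AA
        rw [← Summable.tsum_sub (htailP x hx (⇑φ) ‖φ‖ (norm_nonneg _) (hφbd φ) N)
          (htailP x hx (⇑χ) ‖χ‖ (norm_nonneg _) (hφbd χ) N)]
        apply tsum_congr; intro k
        unfold PP gg
        simp only [hδ]
        ring
      have hTn : T φ n - T χ n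
          = - (w ^ (-N) * (u N * AA a aq b bq w W v δ N - v N * AA a aq b bq w W u δ N)) := by
        rw [hT φ n, hT χ n]
        unfold Psi
        rw [← hsubA u hu_bd', ← hsubA v hv_bd]
        ring
      rw [dist_eq_norm, hTn, norm_neg]
      calc ‖w ^ (-N) * (u N * AA a aq b bq w W v δ N - v N * AA a aq b bq w W u δ N)‖
          ≤ E * dist φ χ * Sh a aq b bq N := hAAbd δ (dist φ χ) hdist0 hδbd N hN0
        _ ≤ E * dist φ χ * Sh a aq b bq n₀ :=
            mul_le_mul_of_nonneg_left (Sh_antitone hhsum (le_max_right _ _)) (by positivity)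
        _ = (E * Sh a aq b bq n₀) * dist φ χ := by ring
        _ ≤ (1/2) * dist φ χ := mul_le_mul_of_nonneg_right hhalf hdist0
        _ = (((1:NNReal)/2 : NNReal) : ℝ) * dist φ χ := by rw [hhalfc]
  obtain ⟨φs, hφs⟩ : ∃ φs : BoundedContinuousFunction ℤ ℂ, T φs = φs :=
    ⟨ContractingWith.fixedPoint T hcontr, hcontr.fixedPoint_isFixedPt⟩
  have hφsb : ∀ n : ℤ, ‖φs n‖ ≤ ‖φs‖ := hφbd φs
  have hfix : ∀ n : ℤ, φs n = w ^ (-(max n n₀)) * Psi a aq b bq w W u v (⇑φs) (max n n₀) := by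
    intro n
    conv_lhs => rw [← hφs]
    exact hT φs n
  have hPsiEq : ∀ n : ℤ, n₀ ≤ n → Psi a aq b bq w W u v (⇑φs) n = w ^ n * φs n := by
    intro n hn
    have h := hfix n
    rw [max_eq_left hn] at h
    rw [h, ← mul_assoc, ← zpow_add₀ hwne, show (n + -n : ℤ) = 0 from by ring, zpow_zero, one_mul]
  set M : ℝ := ‖φs‖ with hMdef
  -- key identity : (τq - z) Psi = - gg
  have hId : ∀ n : ℤ,
      (aq n : ℂ) * Psi a aq b bq w W u v (⇑φs) (n+1)
      + (aq (n-1) : ℂ) * Psi a aq b bq w W u v (⇑φs) (n-1)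
      + (bq n : ℂ) * Psi a aq b bq w W u v (⇑φs) n
      - z * Psi a aq b bq w W u v (⇑φs) n
      = - gg a aq b bq w (⇑φs) n := by
    intro n
    have hrecv := hAArec v hv_bd (⇑φs) M (norm_nonneg _) hφsb
    have hrecu := hAArec u hu_bd' (⇑φs) M (norm_nonneg _) hφsb
    have hv2 : AA a aq b bq w W v (⇑φs) (n-1)
        = PP a aq b bq w W v (⇑φs) n + AA a aq b bq w W v (⇑φs) n := by
      have h := hrecv (n-1)
      rw [show (n-1+1 : ℤ) = n from by ring] at h
      exact h
    have hu2 : AA a aq b bq w W u (⇑φs) (n-1)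
        = PP a aq b bq w W u (⇑φs) n + AA a aq b bq w W u (⇑φs) n := by
      have h := hrecu (n-1)
      rw [show (n-1+1 : ℤ) = n from by ring] at h
      exact h
    have hv1 := hrecv n
    have hu1 := hrecu n
    have hWn := hWr n
    have hun := hu n
    have hvn := hv n
    unfold Psi
    rw [hv2, hu2, hv1, hu1]
    unfold PP
    have hWW : W * W⁻¹ = 1 := mul_inv_cancel₀ hWne
    linear_combination (1 - AA a aq b bq w W v (⇑φs) (n+1)
        - v (n+1) * gg a aq b bq w (⇑φs) (n+1) / W) * hun
      + (AA a aq b bq w W u (⇑φs) (n+1) + u (n+1) * gg a aq b bq w (⇑φs) (n+1) / W) * hvn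
      - (gg a aq b bq w (⇑φs) n / W) * hWn
      - gg a aq b bq w (⇑φs) n * hWW
  -- Psi solves the perturbed equation for n ≥ n₀ + 1
  have hPsiSol : ∀ n : ℤ, n₀ + 1 ≤ n →
      ((a n : ℝ) : ℂ) * Psi a aq b bq w W u v (⇑φs) (n+1)
      + ((a (n-1) : ℝ) : ℂ) * Psi a aq b bq w W u v (⇑φs) (n-1)
      + ((b n : ℝ) : ℂ) * Psi a aq b bq w W u v (⇑φs) n
      = z * Psi a aq b bq w W u v (⇑φs) n := by
    intro n hn
    have h1 := hId n
    have e1 : gg a aq b bq w (⇑φs) n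
        = ((a n - aq n : ℝ) : ℂ) * Psi a aq b bq w W u v (⇑φs) (n+1)
          + ((a (n-1) - aq (n-1) : ℝ) : ℂ) * Psi a aq b bq w W u v (⇑φs) (n-1)
          + ((b n - bq n : ℝ) : ℂ) * Psi a aq b bq w W u v (⇑φs) n := by
      unfold gg
      rw [hPsiEq (n+1) (by omega), hPsiEq (n-1) (by omega), hPsiEq n (by omega)]
      ring
    rw [e1] at h1
    push_cast at h1 ⊢
    linear_combination h1
  -- extend to a global solution
  have hane : ∀ n : ℤ, ((a n : ℝ) : ℂ) ≠ 0 := fun n =>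
    Complex.ofReal_ne_zero.mpr (ne_of_gt (ha n))
  obtain ⟨ψ, hψeq, hψsol⟩ := extend_solution a b hane z n₀
    (Psi a aq b bq w W u v (⇑φs)) hPsiSol
  refine ⟨ψ, hψsol, ?_⟩
  have hub : ∀ n : ℤ, n₀ ≤ n →
      ‖w ^ (-n) * (ψ n - u n)‖ ≤ E * M * Sh a aq b bq n := by
    intro n hn
    rw [hψeq n hn]
    have e : w ^ (-n) * (Psi a aq b bq w W u v (⇑φs) n - u n)
        = - (w ^ (-n) * (u n * AA a aq b bq w W v (⇑φs) n
            - v n * AA a aq b bq w W u (⇑φs) n)) := by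
      unfold Psi; ring
    rw [e, norm_neg]
    exact hAAbd (⇑φs) M (norm_nonneg _) hφsb n (le_trans hn₀0 hn)
  apply tendsto_of_tendsto_of_tendsto_of_le_of_le' tendsto_const_nhds
    (show Tendsto (fun n : ℤ => E * M * Sh a aq b bq n) atTop (nhds 0) from by
      simpa using (Sh_tendsto hhsum).const_mul (E * M))
  · exact Eventually.of_forall (fun n => norm_nonneg _)
  · filter_upwards [eventually_ge_atTop n₀] with n hn
    exact hub n hn
private lemma reflect_sol (aq bq : ℤ → ℝ) (z : ℂ) (x : ℤ → ℂ)
    (hx : ∀ n : ℤ, ((aq n : ℝ) : ℂ) * x (n+1) + ((aq (n-1) : ℝ) : ℂ) * x (n-1)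
      + ((bq n : ℝ) : ℂ) * x n = z * x n) :
    ∀ n : ℤ, ((aq (-(n+1)) : ℝ) : ℂ) * x (-(n+1)) + ((aq (-(n-1+1)) : ℝ) : ℂ) * x (-(n-1))
      + ((bq (-n) : ℝ) : ℂ) * x (-n) = z * x (-n) := by
  intro n
  have h := hx (-n)
  rw [show (-n + 1 : ℤ) = -(n-1) from by ring, show (-n - 1 : ℤ) = -(n+1) from by ring] at h
  rw [show (-(n-1+1) : ℤ) = -n from by ring]
  linear_combination h

private lemma reflect_short {a aq b bq : ℤ → ℝ}
    (hshort : Summable (fun n : ℤ => (1 + |(n : ℝ)|) * (|a n - aq n| + |b n - bq n|))) :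
    Summable (fun n : ℤ =>
      (1 + |(n : ℝ)|) * (|a (-(n+1)) - aq (-(n+1))| + |b (-n) - bq (-n)|)) := by
  set f : ℤ → ℝ := fun n => (1 + |(n : ℝ)|) * (|a n - aq n| + |b n - bq n|) with hf
  have hdom : Summable (fun n : ℤ => 2 * f (-(n+1)) + f (-n)) := by
    refine Summable.add (Summable.mul_left 2 ?_) ?_
    · exact hshort.comp_injective (fun x y hxy => by omega)
    · exact hshort.comp_injective (fun x y hxy => by omega)
  refine hdom.of_nonneg_of_le (fun n => by positivity) (fun n => ?_)
  simp only [hf]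
  have hA : |(n : ℝ)| ≤ |(n:ℝ) + 1| + 1 := by
    calc |(n:ℝ)| = |((n:ℝ) + 1) + (-1)| := by norm_num
      _ ≤ |(n:ℝ) + 1| + |(-1 : ℝ)| := abs_add_le _ _
      _ = |(n:ℝ) + 1| + 1 := by norm_num
  have e1 : |((-(n+1) : ℤ) : ℝ)| = |(n:ℝ) + 1| := by push_cast; rw [abs_neg]
  have e2 : |((-n : ℤ) : ℝ)| = |(n:ℝ)| := by push_cast; rw [abs_neg]
  rw [e1, e2]
  have hX : (0:ℝ) ≤ |a (-(n+1)) - aq (-(n+1))| := abs_nonneg _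
  have hY : (0:ℝ) ≤ |b (-(n+1)) - bq (-(n+1))| := abs_nonneg _
  have hZa : (0:ℝ) ≤ |a (-n) - aq (-n)| := abs_nonneg _
  have hZb : (0:ℝ) ≤ |b (-n) - bq (-n)| := abs_nonneg _
  have hB : (0:ℝ) ≤ |(n:ℝ) + 1| := abs_nonneg _
  have hA0 : (0:ℝ) ≤ |(n:ℝ)| := abs_nonneg _
  have key1 : (1 + |(n:ℝ)|) * |a (-(n+1)) - aq (-(n+1))|
      ≤ 2 * (1 + |(n:ℝ) + 1|) * |a (-(n+1)) - aq (-(n+1))| := by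
    apply mul_le_mul_of_nonneg_right _ hX
    linarith
  nlinarith [mul_nonneg (by linarith : (0:ℝ) ≤ 2 * (1 + |(n:ℝ)+1|)) hY,
    mul_nonneg (by linarith : (0:ℝ) ≤ 1 + |(n:ℝ)|) hZa]
theorem stmt_6
    (a aq : ℤ → ℝ) (b bq : ℤ → ℝ)
    (ha : ∀ n, 0 < a n) (haq : ∀ n, 0 < aq n)
    (hbd : ∃ A : ℝ, ∀ n, a n ≤ A ∧ aq n ≤ A ∧ |b n| ≤ A ∧ |bq n| ≤ A)
    (hinf : ∃ ε : ℝ, 0 < ε ∧ ∀ n, ε ≤ a n ∧ ε ≤ aq n)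
    (hshort : Summable (fun n : ℤ => (1 + |(n : ℝ)|) * (|a n - aq n| + |b n - bq n|)))
    (z w : ℂ) (hw0 : 0 < ‖w‖) (hw1 : ‖w‖ ≤ 1)
    (ψqp ψqm : ℤ → ℂ)
    (hψqp : ∀ n : ℤ, (aq n : ℂ) * ψqp (n+1) + (aq (n-1) : ℂ) * ψqp (n-1) + (bq n : ℂ) * ψqp n
      = z * ψqp n)
    (hψqm : ∀ n : ℤ, (aq n : ℂ) * ψqm (n+1) + (aq (n-1) : ℂ) * ψqm (n-1) + (bq n : ℂ) * ψqm n
      = z * ψqm n)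
    (hcase :
      -- case (i)
      (∃ θp θm : ℤ → ℂ,
        (∀ n : ℤ, ψqp n = θp n * w ^ n) ∧
        (∀ n : ℤ, ψqm n = θm n * w ^ (-n)) ∧
        (∃ c C : ℝ, 0 < c ∧ ∀ n : ℤ,
          c ≤ ‖θp n‖ ∧ ‖θp n‖ ≤ C ∧
          c ≤ ‖θm n‖ ∧ ‖θm n‖ ≤ C) ∧
        (aq 0 : ℂ) * (ψqm 0 * ψqp 1 - ψqm 1 * ψqp 0) ≠ 0) ∨
      -- case (ii)
      (‖w‖ = 1 ∧ ψqp = ψqm ∧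
        (∃ θ : ℤ → ℂ,
          (∀ n : ℤ, ψqp n = θ n * w ^ n) ∧
          (∃ c C : ℝ, 0 < c ∧ ∀ n : ℤ,
            c ≤ ‖θ n‖ ∧ ‖θ n‖ ≤ C)) ∧
        (∃ φhat θhat : ℤ → ℂ,
          (∀ n : ℤ, (aq n : ℂ) * φhat (n+1) + (aq (n-1) : ℂ) * φhat (n-1)
            + (bq n : ℂ) * φhat n = z * φhat n) ∧
          (∀ n : ℤ, φhat n = ψqp n * (θhat n + (n : ℂ))) ∧
          (∃ C : ℝ, ∀ n : ℤ, ‖θhat n‖ ≤ C) ∧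
          (aq 0 : ℂ) * (ψqp 0 * φhat 1 - ψqp 1 * φhat 0) ≠ 0))) :
    ∃ ψp ψm : ℤ → ℂ,
      (∀ n : ℤ, (a n : ℂ) * ψp (n+1) + (a (n-1) : ℂ) * ψp (n-1) + (b n : ℂ) * ψp n
        = z * ψp n) ∧
      (∀ n : ℤ, (a n : ℂ) * ψm (n+1) + (a (n-1) : ℂ) * ψm (n-1) + (b n : ℂ) * ψm n
        = z * ψm n) ∧
      Tendsto (fun n : ℤ => ‖w ^ (-n) * (ψp n - ψqp n)‖) atTop (nhds 0) ∧
      Tendsto (fun n : ℤ => ‖w ^ n * (ψm n - ψqm n)‖) atBot (nhds 0) := by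
  rcases hcase with ⟨θp, θm, hθp, hθm, ⟨c, C, hc, hbds⟩, hWi⟩ |
    ⟨hw1eq, hpm, ⟨θ, hθ, ⟨c, C, hc, hbds⟩⟩, ⟨φh, θh, hφh_sol, hφh_form, ⟨Ch, hCh⟩, hWii⟩⟩
  · -- case (i)
    have hC0 : 0 ≤ C := le_trans (norm_nonneg _) (hbds 0).2.1
    have hzpos : ∀ m : ℤ, 0 < ‖w‖ ^ m := fun m => zpow_pos hw0 m
    have hubd : ∀ n : ℤ, 0 ≤ n → ‖ψqp n‖ ≤ C * ‖w‖ ^ n := by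
      intro n _
      rw [hθp n, norm_mul, norm_zpow]
      exact mul_le_mul_of_nonneg_right (hbds n).2.1 (hzpos n).le
    have hvbd : ∀ m : ℤ, 0 ≤ m →
        ‖ψqm m‖ ≤ C * (1 + (m:ℝ)) * ‖w‖ ^ (-m) := by
      intro m hm
      rw [hθm m, norm_mul, norm_zpow]
      have hm0 : (0:ℝ) ≤ (m:ℝ) := by exact_mod_cast hm
      calc ‖θm m‖ * ‖w‖ ^ (-m) ≤ C * ‖w‖ ^ (-m) :=
            mul_le_mul_of_nonneg_right (hbds m).2.2.2 (hzpos _).le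
        _ ≤ C * (1 + (m:ℝ)) * ‖w‖ ^ (-m) := by
            apply mul_le_mul_of_nonneg_right _ (hzpos _).le
            nlinarith
    have hWd : (aq 0 : ℂ) * (ψqp 0 * ψqm 1 - ψqp 1 * ψqm 0) ≠ 0 := by
      intro h; apply hWi; linear_combination -h
    obtain ⟨ψp, hψpsol, hψplim⟩ := key a aq b bq ha hshort z w hw0 hw1 ψqp ψqm hψqp hψqm
      hWd C hubd hvbd
    -- reflected problem
    have hubd' : ∀ n : ℤ, 0 ≤ n → ‖ψqm (-n)‖ ≤ C * ‖w‖ ^ n := by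
      intro n _
      have h := hθm (-n)
      rw [neg_neg] at h
      rw [h, norm_mul, norm_zpow]
      exact mul_le_mul_of_nonneg_right (hbds (-n)).2.2.2 (hzpos n).le
    have hvbd' : ∀ m : ℤ, 0 ≤ m →
        ‖ψqp (-m)‖ ≤ C * (1 + (m:ℝ)) * ‖w‖ ^ (-m) := by
      intro m hm
      rw [hθp (-m), norm_mul, norm_zpow]
      have hm0 : (0:ℝ) ≤ (m:ℝ) := by exact_mod_cast hm
      calc ‖θp (-m)‖ * ‖w‖ ^ (-m) ≤ C * ‖w‖ ^ (-m) :=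
            mul_le_mul_of_nonneg_right (hbds (-m)).2.1 (hzpos _).le
        _ ≤ C * (1 + (m:ℝ)) * ‖w‖ ^ (-m) := by
            apply mul_le_mul_of_nonneg_right _ (hzpos _).le
            nlinarith
    have hwr := wronskian_const aq bq z ψqm ψqp hψqm hψqp (-1)
    norm_num at hwr
    have hWr' : ((aq (-(0+1)) : ℝ) : ℂ) * (ψqm (-0) * ψqp (-1) - ψqm (-1) * ψqp (-0)) ≠ 0 := by
      rw [show (-(0+1) : ℤ) = -1 from by norm_num, show (-0 : ℤ) = 0 from by norm_num]
      intro h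
      apply hWi
      linear_combination -hwr - h
    obtain ⟨ψ', hψ'sol, hψ'lim⟩ := key (fun k => a (-(k+1))) (fun k => aq (-(k+1)))
      (fun k => b (-k)) (fun k => bq (-k)) (fun k => ha (-(k+1))) (reflect_short hshort)
      z w hw0 hw1 (fun k => ψqm (-k)) (fun k => ψqp (-k))
      (reflect_sol aq bq z ψqm hψqm) (reflect_sol aq bq z ψqp hψqp)
      hWr' C hubd' hvbd'
    refine ⟨ψp, fun n => ψ' (-n), hψpsol, ?_, hψplim, ?_⟩
    · intro n
      have h := hψ'sol (-n)
      rw [show (-(-n+1) : ℤ) = n - 1 from by ring, show (-(-n-1+1) : ℤ) = n from by ring,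
        show (-(-n) : ℤ) = n from by ring, show (-n+1 : ℤ) = -(n-1) from by ring,
        show (-n-1 : ℤ) = -(n+1) from by ring] at h
      linear_combination h
    · have hcomp := hψ'lim.comp (tendsto_neg_atBot_atTop (G := ℤ))
      simpa only [Function.comp_def, neg_neg] using hcomp
  · -- case (ii)
    subst hpm
    have hC0 : 0 ≤ C := le_trans (norm_nonneg _) (hbds 0).2
    have hCh0 : 0 ≤ Ch := le_trans (norm_nonneg _) (hCh 0)
    set D : ℝ := C * (Ch + 1) with hDdef
    have hCD : C ≤ D := by nlinarith
    have hpsibd : ∀ n : ℤ, ‖ψqp n‖ ≤ C := by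
      intro n
      rw [hθ n, norm_mul, norm_zpow, hw1eq, one_zpow, mul_one]
      exact (hbds n).2
    have hthbd : ∀ n : ℤ, ‖θh n + (n : ℂ)‖ ≤ Ch + |(n:ℝ)| := by
      intro n
      refine (norm_add_le _ _).trans ?_
      have e : ‖((n:ℤ) : ℂ)‖ = |(n:ℝ)| := by
        rw [Complex.norm_intCast]
      rw [e]
      exact add_le_add_left (hCh n) _
    have hphbd : ∀ m : ℤ, 0 ≤ m → ‖φh m‖ ≤ C * (Ch + (m:ℝ)) := by
      intro m hm
      have hm0 : (0:ℝ) ≤ (m:ℝ) := by exact_mod_cast hm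
      rw [hφh_form m, norm_mul]
      have h2 : ‖θh m + (m:ℂ)‖ ≤ Ch + (m:ℝ) := by
        have := hthbd m
        rwa [abs_of_nonneg hm0] at this
      exact mul_le_mul (hpsibd m) h2 (norm_nonneg _) hC0
    have hphbd' : ∀ m : ℤ, 0 ≤ m → ‖φh (-m)‖ ≤ C * (Ch + (m:ℝ)) := by
      intro m hm
      have hm0 : (0:ℝ) ≤ (m:ℝ) := by exact_mod_cast hm
      rw [hφh_form (-m), norm_mul]
      have h2 : ‖θh (-m) + ((-m : ℤ):ℂ)‖ ≤ Ch + (m:ℝ) := by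
        have := hthbd (-m)
        rwa [show |((-m : ℤ):ℝ)| = (m:ℝ) from by push_cast; rw [abs_neg, abs_of_nonneg hm0]]
          at this
      exact mul_le_mul (hpsibd (-m)) h2 (norm_nonneg _) hC0
    have hCD2 : ∀ m : ℤ, 0 ≤ m → C * (Ch + (m:ℝ)) ≤ D * (1 + (m:ℝ)) := by
      intro m hm
      have hm0 : (0:ℝ) ≤ (m:ℝ) := by exact_mod_cast hm
      rw [hDdef]
      nlinarith [mul_nonneg hC0 (mul_nonneg hCh0 hm0)]
    have hubd : ∀ n : ℤ, 0 ≤ n → ‖ψqp n‖ ≤ D * ‖w‖ ^ n := by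
      intro n _
      rw [hw1eq, one_zpow, mul_one]
      exact (hpsibd n).trans hCD
    have hvbd : ∀ m : ℤ, 0 ≤ m →
        ‖φh m‖ ≤ D * (1 + (m:ℝ)) * ‖w‖ ^ (-m) := by
      intro m hm
      rw [hw1eq, one_zpow, mul_one]
      exact (hphbd m hm).trans (hCD2 m hm)
    obtain ⟨ψp, hψpsol, hψplim⟩ := key a aq b bq ha hshort z w hw0 hw1 ψqp φh hψqp hφh_sol
      hWii D hubd hvbd
    -- reflected problem
    have hubd' : ∀ n : ℤ, 0 ≤ n → ‖ψqp (-n)‖ ≤ D * ‖w‖ ^ n := by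
      intro n _
      rw [hw1eq, one_zpow, mul_one]
      exact (hpsibd (-n)).trans hCD
    have hvbd' : ∀ m : ℤ, 0 ≤ m →
        ‖φh (-m)‖ ≤ D * (1 + (m:ℝ)) * ‖w‖ ^ (-m) := by
      intro m hm
      rw [hw1eq, one_zpow, mul_one]
      exact (hphbd' m hm).trans (hCD2 m hm)
    have hwr := wronskian_const aq bq z ψqp φh hψqp hφh_sol (-1)
    norm_num at hwr
    have hWr' : ((aq (-(0+1)) : ℝ) : ℂ) * (ψqp (-0) * φh (-1) - ψqp (-1) * φh (-0)) ≠ 0 := by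
      rw [show (-(0+1) : ℤ) = -1 from by norm_num, show (-0 : ℤ) = 0 from by norm_num]
      intro h
      apply hWii
      linear_combination -hwr - h
    obtain ⟨ψ', hψ'sol, hψ'lim⟩ := key (fun k => a (-(k+1))) (fun k => aq (-(k+1)))
      (fun k => b (-k)) (fun k => bq (-k)) (fun k => ha (-(k+1))) (reflect_short hshort)
      z w hw0 hw1 (fun k => ψqp (-k)) (fun k => φh (-k))
      (reflect_sol aq bq z ψqp hψqp) (reflect_sol aq bq z φh hφh_sol)
      hWr' D hubd' hvbd'
    refine ⟨ψp, fun n => ψ' (-n), hψpsol, ?_, hψplim, ?_⟩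
    · intro n
      have h := hψ'sol (-n)
      rw [show (-(-n+1) : ℤ) = n - 1 from by ring, show (-(-n-1+1) : ℤ) = n from by ring,
        show (-(-n) : ℤ) = n from by ring, show (-n+1 : ℤ) = -(n-1) from by ring,
        show (-n-1 : ℤ) = -(n+1) from by ring] at h
      linear_combination h
    · have hcomp := hψ'lim.comp (tendsto_neg_atBot_atTop (G := ℤ))
      simpa only [Function.comp_def, neg_neg] using hcomp
end
end Stmt6Aux
end

section
/- Let a, a_q : ℤ → (0,∞) and b, b_q : ℤ → ℝ, and let K : ℤ² → ℂ satisfy K(n,m) = 0 for m < n, K(n,n) ≠ 0 for all n, and the intertwining identity a(n-1)K(n-1,m) + b(n)K(n,m) + a(n)K(n+1,m) = a_q(m-1)K(n,m-1) + b_q(m)K(n,m) + a_q(m)K(n,m+1) for all n, m ∈ ℤ. Then for every n ∈ ℤ: a(n)/a_q(n) = K(n+1,n+1)/K(n,n), and b(n) - b_q(n) = a_q(n) K(n,n+1)/K(n,n) - a_q(n-1) K(n-1,n)/K(n-1,n-1). -/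
theorem stmt_9
    (a aq : ℤ → ℝ) (b bq : ℤ → ℝ)
    (ha : ∀ n, 0 < a n) (haq : ∀ n, 0 < aq n)
    (K : ℤ → ℤ → ℂ)
    (hK0 : ∀ n m : ℤ, m < n → K n m = 0)
    (hKne : ∀ n : ℤ, K n n ≠ 0)
    (hint : ∀ n m : ℤ,
      (a (n-1) : ℂ) * K (n-1) m + (b n : ℂ) * K n m + (a n : ℂ) * K (n+1) m =
      (aq (m-1) : ℂ) * K n (m-1) + (bq m : ℂ) * K n m + (aq m : ℂ) * K n (m+1)) :
    ∀ n : ℤ,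
      ((a n : ℂ) / (aq n : ℂ) = K (n+1) (n+1) / K n n) ∧
      ((b n : ℂ) - (bq n : ℂ) =
        (aq n : ℂ) * K n (n+1) / K n n - (aq (n-1) : ℂ) * K (n-1) n / K (n-1) (n-1)) := by
  have key : ∀ k : ℤ, (a k : ℂ) * K k k = (aq k : ℂ) * K (k+1) (k+1) := by
    intro k
    have h := hint (k+1) k
    have h1 : K (k+1) k = 0 := hK0 _ _ (by omega)
    have h2 : K (k+1+1) k = 0 := hK0 _ _ (by omega)
    have h3 : K (k+1) (k-1) = 0 := hK0 _ _ (by omega)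
    simp only [add_sub_cancel_right, h1, h2, h3, mul_zero, add_zero, zero_add] at h
    exact h
  intro n
  have haqn : (aq n : ℂ) ≠ 0 := by exact_mod_cast (haq n).ne'
  have haqn1 : (aq (n-1) : ℂ) ≠ 0 := by exact_mod_cast (haq (n-1)).ne'
  constructor
  · rw [div_eq_div_iff haqn (hKne n)]
    linear_combination key n
  · have h := hint n n
    have h1 : K (n+1) n = 0 := hK0 _ _ (by omega)
    have h2 : K n (n-1) = 0 := hK0 _ _ (by omega)
    simp only [h1, h2, mul_zero, add_zero, zero_add] at h
    -- (b n - bq n) * K n n = aq n * K n (n+1) - a (n-1) * K (n-1) n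
    have hk := key (n-1)
    rw [sub_add_cancel] at hk
    -- a (n-1) * K (n-1) (n-1) = aq (n-1) * K n n
    rw [div_sub_div _ _ (hKne n) (hKne (n-1)), eq_div_iff (mul_ne_zero (hKne n) (hKne (n-1)))]
    linear_combination (K (n-1) (n-1)) * h - (K (n-1) n) * hk
end

section
/- Let c : ℤ → [0,∞) with Σ_{m∈ℤ} (1+|m|) c(m) < ∞ and C(s) = Σ_{j=⌊s/2⌋+1}^{∞} c(j). If F : ℤ² → ℝ satisfies |F(l,m)| ≤ C(l+m) for all l, m ∈ ℤ, then for every n ∈ ℤ the operator on ℓ²(ℕ₀) defined by (ℱ_n f)(j) = Σ_{l=0}^{∞} F(n+l, n+j) f(l) is Hilbert–Schmidt; in particular Σ_{l,j ≥ 0} F(n+l, n+j)² < ∞. -/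
open Finset in
/-- Diagonal summability transfer. -/
lemma aux_diag (g : ℕ → ℝ) (hg : ∀ k, 0 ≤ g k)
    (h : Summable fun k : ℕ => ((k : ℝ) + 1) * g k) :
    Summable (fun p : ℕ × ℕ => g (p.1 + p.2)) := by
  rw [← (Finset.HasAntidiagonal.sigmaAntidiagonalEquivProd (A := ℕ)).summable_iff]
  have hfib : ∀ k : ℕ, ∀ x : {p : ℕ × ℕ // p ∈ antidiagonal k},
      g ((x : ℕ × ℕ).1 + (x : ℕ × ℕ).2) = g k := by
    rintro k ⟨⟨a, b⟩, hx⟩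
    rw [Finset.HasAntidiagonal.mem_antidiagonal] at hx
    simp [hx]
  apply (summable_sigma_of_nonneg ?_).2
  constructor
  · intro k
    exact Summable.of_finite
  · apply h.congr
    intro k
    rw [tsum_fintype]
    symm
    calc ∑ x : {p : ℕ × ℕ // p ∈ antidiagonal k},
          ((fun p : ℕ × ℕ => g (p.1 + p.2)) ∘ Finset.HasAntidiagonal.sigmaAntidiagonalEquivProd) ⟨k, x⟩
        = ∑ x : {p : ℕ × ℕ // p ∈ antidiagonal k}, g k := by
          apply Finset.sum_congr rfl
          intro x _
          exact hfib k x
      _ = (k + 1 : ℕ) • g k := by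
          rw [Finset.sum_const, Finset.card_univ]
          congr 1
          rw [Fintype.card_coe, Nat.card_antidiagonal]
      _ = ((k : ℝ) + 1) * g k := by
          rw [nsmul_eq_mul]; push_cast; ring
  · rintro ⟨k, x⟩
    exact hg _

set_option maxHeartbeats 1000000 in
theorem stmt_13
    (c : ℤ → ℝ) (hc : ∀ m, 0 ≤ c m)
    (hcs : Summable (fun m : ℤ => (1 + |(m : ℝ)|) * c m))
    (C : ℤ → ℝ) (hC : ∀ s : ℤ, C s = ∑' j : ℕ, c (Int.fdiv s 2 + 1 + j))
    (F : ℤ → ℤ → ℝ)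
    (hFbd : ∀ l m : ℤ, |F l m| ≤ C (l+m))
    (n : ℤ) :
    Summable (fun p : ℕ × ℕ => (F (n + p.1) (n + p.2))^2) ∧
    ∃ T : lp (fun _ : ℕ => ℂ) 2 →L[ℂ] lp (fun _ : ℕ => ℂ) 2,
      (∀ f : lp (fun _ : ℕ => ℂ) 2, ∀ j : ℕ,
        T f j = ∑' l : ℕ, (F (n + l) (n + j) : ℂ) * f l) ∧
      Summable (fun l : ℕ => ‖T (lp.single 2 l 1)‖^2) := by
  set K : ℝ := ∑' m : ℤ, (1 + |(m : ℝ)|) * c m with hKdef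
  have hcsnn : ∀ m : ℤ, 0 ≤ (1 + |(m : ℝ)|) * c m := fun m =>
    mul_nonneg (by positivity) (hc m)
  have hcsum : Summable c :=
    Summable.of_nonneg_of_le hc (fun m => le_mul_of_one_le_left (hc m) (le_add_of_nonneg_right (abs_nonneg _))) hcs
  have hinj : ∀ a : ℤ, Function.Injective (fun i : ℕ => a + (i : ℤ)) := by
    intro a i j h
    simp only at h
    omega
  have htailsum : ∀ a : ℤ, Summable (fun i : ℕ => c (a + i)) := fun a =>
    hcsum.comp_injective (hinj a)
  have htailnn : ∀ a : ℤ, 0 ≤ ∑' i : ℕ, c (a + i) := fun a =>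
    tsum_nonneg (fun i => hc _)
  have hbound : ∀ a : ℤ, 0 ≤ a → (1 + (a : ℝ)) * ∑' i : ℕ, c (a + i) ≤ K := by
    intro a ha
    rw [← tsum_mul_left]
    calc ∑' i : ℕ, (1 + (a : ℝ)) * c (a + i)
        ≤ ∑' i : ℕ, (1 + |((a + i : ℤ) : ℝ)|) * c (a + i) := by
          apply Summable.tsum_le_tsum _ ((htailsum a).mul_left _)
            (hcs.comp_injective (hinj a))
          intro i
          apply mul_le_mul_of_nonneg_right _ (hc _)
          have : (a : ℝ) ≤ |((a + i : ℤ) : ℝ)| := by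
            rw [← abs_of_nonneg (show (0:ℝ) ≤ (a:ℝ) by exact_mod_cast ha)]
            have h1 : (0:ℝ) ≤ (a:ℝ) := by exact_mod_cast ha
            have h2 : (0:ℝ) ≤ (i:ℝ) := Nat.cast_nonneg _
            apply abs_le_abs <;> push_cast <;> linarith
          linarith
      _ ≤ K := tsum_comp_le_tsum_of_inj hcs hcsnn (hinj a)
  -- weighted tail summability
  have hG1 : Summable fun k : ℕ => ((k : ℝ) + 1) * c (n + 1 + k) := by
    have h1 : Summable fun k : ℕ => (1 + |(((n + 1 : ℤ) + (k : ℤ) : ℤ) : ℝ)|) * c (n + 1 + k) :=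
      hcs.comp_injective (hinj (n + 1))
    apply Summable.of_nonneg_of_le
      (fun k => mul_nonneg (by positivity) (hc _)) _ (h1.mul_left (2 + |(n : ℝ)|))
    intro k
    have hcast : (((n + 1 : ℤ) + (k : ℤ) : ℤ) : ℝ) = (n : ℝ) + 1 + k := by push_cast; ring
    rw [hcast]
    have hx : ((k : ℝ) + 1) ≤ |(n : ℝ) + 1 + k| + |(n : ℝ)| := by
      have h2 := le_abs_self ((n : ℝ) + 1 + k)
      have h3 := neg_abs_le ((n : ℝ))
      linarith
    nlinarith [mul_le_mul_of_nonneg_right hx (hc (n + 1 + (k : ℤ))),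
      mul_nonneg (abs_nonneg ((n : ℝ) + 1 + k)) (hc (n + 1 + (k : ℤ))),
      mul_nonneg (mul_nonneg (abs_nonneg ((n : ℝ))) (abs_nonneg ((n : ℝ) + 1 + k)))
        (hc (n + 1 + (k : ℤ))),
      mul_nonneg (abs_nonneg ((n : ℝ))) (hc (n + 1 + (k : ℤ)))]
  have hG : Summable (fun p : ℕ × ℕ => c (n + 1 + p.1 + p.2)) := by
    have := aux_diag (fun k => c (n + 1 + k)) (fun k => hc _) hG1
    apply this.congr
    intro p
    congr 1
    push_cast
    ring
  have hE : Summable (fun t : ℕ => ∑' i : ℕ, c (n + 1 + t + i)) :=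
    ((summable_prod_of_nonneg (fun p => hc _)).mp hG).2
  set D : ℕ → ℝ := fun k => C (2 * n + k) with hDdef
  have hDeq : ∀ k : ℕ, D k = ∑' i : ℕ, c (n + 1 + ((k / 2 : ℕ) : ℤ) + i) := by
    intro k
    show C (2 * n + k) = _
    rw [hC]
    congr 1
    funext i
    congr 2
    rw [Int.fdiv_eq_ediv_of_nonneg _ (by norm_num)]
    omega
  have hDnn : ∀ k, 0 ≤ D k := by
    intro k; rw [hDeq]; exact tsum_nonneg fun i => hc _
  have hDsum : Summable D := by
    have hP : Summable (fun p : ℕ × Fin 2 => ∑' i : ℕ, c (n + 1 + p.1 + i)) := by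
      apply (summable_prod_of_nonneg (fun p => tsum_nonneg fun i => hc _)).mpr
      refine ⟨fun t => Summable.of_finite, ?_⟩
      apply (hE.mul_left 2).congr
      intro t
      conv_rhs => rw [tsum_fintype]
      simp [two_mul]
    have := hP.comp_injective (Nat.divModEquiv 2).injective
    apply this.congr
    intro k
    simp only [Function.comp_apply, Nat.divModEquiv]
    exact (hDeq k).symm
  set k₀ : ℕ := 4 * n.natAbs + 4 with hk₀
  have hshift : ∀ k : ℕ, (((k + k₀ : ℕ) : ℝ) + 1) * D (k + k₀) ^ 2 ≤ 4 * K * D (k + k₀) := by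
    intro k
    set m : ℕ := k + k₀ with hm
    set a : ℤ := n + 1 + ((m / 2 : ℕ) : ℤ) with hadef
    have ha : (0 : ℤ) ≤ a := by omega
    have hlin : ((m : ℤ) + 1) ≤ 4 * (1 + a) := by omega
    have hlinR : ((m : ℝ) + 1) ≤ 4 * (1 + (a : ℝ)) := by exact_mod_cast hlin
    have hbR : (1 + (a : ℝ)) * D m ≤ K := by
      rw [hDeq m]; exact hbound a ha
    have hDm := hDnn m
    nlinarith [mul_le_mul_of_nonneg_right hlinR (mul_nonneg hDm hDm),
      mul_le_mul_of_nonneg_right hbR hDm]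
  have hw : Summable fun k : ℕ => ((k : ℝ) + 1) * D k ^ 2 := by
    apply (summable_nat_add_iff k₀).1
    exact Summable.of_nonneg_of_le
      (fun k => mul_nonneg (by positivity) (sq_nonneg _)) hshift
      (((summable_nat_add_iff k₀).2 hDsum).mul_left (4 * K))
  have hDiag : Summable (fun p : ℕ × ℕ => D (p.1 + p.2) ^ 2) :=
    aux_diag _ (fun k => sq_nonneg _) hw
  have part1 : Summable (fun p : ℕ × ℕ => (F (n + p.1) (n + p.2)) ^ 2) := by
    apply Summable.of_nonneg_of_le (fun p => sq_nonneg _) _ hDiag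
    intro p
    have h1 : |F (n + p.1) (n + p.2)| ≤ C ((n + p.1) + (n + p.2)) := hFbd _ _
    have h2 : ((n + (p.1 : ℤ)) + (n + (p.2 : ℤ))) = 2 * n + ((p.1 + p.2 : ℕ) : ℤ) := by
      push_cast; ring
    rw [h2] at h1
    calc F (n + p.1) (n + p.2) ^ 2 = |F (n + p.1) (n + p.2)| ^ 2 := (sq_abs _).symm
      _ ≤ D (p.1 + p.2) ^ 2 := pow_le_pow_left₀ (abs_nonneg _) h1 2
  refine ⟨part1, ?_⟩
  -- Part 2: the Hilbert–Schmidt operator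
  have hp2 : (0 : ℝ) < (2 : ENNReal).toReal := by norm_num
  have hrpow : ∀ x : ℝ, x ^ (2 : ENNReal).toReal = x ^ 2 := by
    intro x
    rw [show ((2 : ENNReal)).toReal = (2 : ℝ) by norm_num, Real.rpow_two]
  have hrowmem : ∀ j : ℕ, Memℓp (fun l : ℕ => ((F (n + l) (n + j) : ℝ) : ℂ)) 2 := by
    intro j
    apply memℓp_gen
    have hcol : Function.Injective (fun l : ℕ => ((l, j) : ℕ × ℕ)) :=
      fun a b h => congrArg Prod.fst h
    have hs := part1.comp_injective hcol
    apply hs.congr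
    intro l
    show F (n + l) (n + j) ^ 2 = _
    rw [hrpow, Complex.norm_real, Real.norm_eq_abs, sq_abs]
  set Krow : ℕ → lp (fun _ : ℕ => ℂ) 2 :=
    fun j => ⟨fun l => ((F (n + l) (n + j) : ℝ) : ℂ), hrowmem j⟩ with hKrowdef
  have hKrow_apply : ∀ j l : ℕ, Krow j l = ((F (n + l) (n + j) : ℝ) : ℂ) := fun j l => rfl
  have hKrow_norm : ∀ j, ‖Krow j‖ ^ 2 = ∑' l : ℕ, (F (n + l) (n + j)) ^ 2 := by
    intro j
    have h := lp.norm_rpow_eq_tsum hp2 (Krow j)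
    simp only [hrpow] at h
    rw [h]
    congr 1
    funext l
    rw [Complex.norm_real, Real.norm_eq_abs, sq_abs]
  have hSsum : Summable fun j : ℕ => ‖Krow j‖ ^ 2 := by
    have hswap : Summable (fun q : ℕ × ℕ => (F (n + q.2) (n + q.1)) ^ 2) := part1.prod_symm
    have hmarg := ((summable_prod_of_nonneg (fun q => sq_nonneg _)).mp hswap).2
    apply hmarg.congr
    intro j
    exact (hKrow_norm j).symm
  set S : ℝ := ∑' j : ℕ, ‖Krow j‖ ^ 2 with hSdef
  have hS0 : 0 ≤ S := tsum_nonneg fun j => sq_nonneg _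
  have hgle : ∀ (f : lp (fun _ : ℕ => ℂ) 2) (j : ℕ),
      ‖(inner ℂ (Krow j) f : ℂ)‖ ^ 2 ≤ ‖Krow j‖ ^ 2 * ‖f‖ ^ 2 := by
    intro f j
    calc ‖(inner ℂ (Krow j) f : ℂ)‖ ^ 2 ≤ (‖Krow j‖ * ‖f‖) ^ 2 :=
          pow_le_pow_left₀ (norm_nonneg _) (norm_inner_le_norm _ _) 2
      _ = ‖Krow j‖ ^ 2 * ‖f‖ ^ 2 := by ring
  have hgsum : ∀ f : lp (fun _ : ℕ => ℂ) 2,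
      Summable fun j : ℕ => ‖(inner ℂ (Krow j) f : ℂ)‖ ^ 2 := by
    intro f
    exact Summable.of_nonneg_of_le (fun j => sq_nonneg _) (hgle f)
      (hSsum.mul_right (‖f‖ ^ 2))
  have hgmem : ∀ f : lp (fun _ : ℕ => ℂ) 2,
      Memℓp (fun j : ℕ => (inner ℂ (Krow j) f : ℂ)) 2 := by
    intro f
    apply memℓp_gen
    simp only [hrpow]
    exact hgsum f
  let L : lp (fun _ : ℕ => ℂ) 2 →ₗ[ℂ] lp (fun _ : ℕ => ℂ) 2 :=
    { toFun := fun f => ⟨fun j => (inner ℂ (Krow j) f : ℂ), hgmem f⟩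
      map_add' := by
        intro f g
        apply lp.ext
        funext j
        show (inner ℂ (Krow j) (f + g) : ℂ) = _
        rw [lp.coeFn_add, Pi.add_apply]
        exact inner_add_right _ _ _
      map_smul' := by
        intro a f
        apply lp.ext
        funext j
        show (inner ℂ (Krow j) (a • f) : ℂ) = _
        rw [lp.coeFn_smul, Pi.smul_apply]
        exact inner_smul_right _ _ _ }
  have hLapply : ∀ (f : lp (fun _ : ℕ => ℂ) 2) (j : ℕ),
      L f j = (inner ℂ (Krow j) f : ℂ) := fun f j => rfl
  have hLnorm : ∀ f : lp (fun _ : ℕ => ℂ) 2,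
      ‖L f‖ ^ 2 = ∑' j : ℕ, ‖(inner ℂ (Krow j) f : ℂ)‖ ^ 2 := by
    intro f
    have h := lp.norm_rpow_eq_tsum hp2 (L f)
    simp only [hrpow] at h
    rw [h]
    exact tsum_congr fun i => congrArg (fun z : ℂ => ‖z‖ ^ 2) (hLapply f i)
  have hLb : ∀ f : lp (fun _ : ℕ => ℂ) 2, ‖L f‖ ≤ Real.sqrt S * ‖f‖ := by
    intro f
    have h2 : ‖L f‖ ^ 2 ≤ S * ‖f‖ ^ 2 := by
      rw [hLnorm f, hSdef, ← tsum_mul_right]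
      exact Summable.tsum_le_tsum (hgle f) (hgsum f) (hSsum.mul_right _)
    calc ‖L f‖ = Real.sqrt (‖L f‖ ^ 2) := (Real.sqrt_sq (norm_nonneg _)).symm
      _ ≤ Real.sqrt (S * ‖f‖ ^ 2) := Real.sqrt_le_sqrt h2
      _ = Real.sqrt S * ‖f‖ := by
          rw [Real.sqrt_mul hS0, Real.sqrt_sq (norm_nonneg _)]
  refine ⟨L.mkContinuous (Real.sqrt S) hLb, ?_, ?_⟩
  · intro f j
    show (inner ℂ (Krow j) f : ℂ) = _
    rw [lp.inner_eq_tsum]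
    congr 1
    funext l
    rw [RCLike.inner_apply', hKrow_apply]
    rw [Complex.conj_ofReal]
  · have hTe : ∀ l j : ℕ,
        (L.mkContinuous (Real.sqrt S) hLb) (lp.single 2 l 1) j
          = ((F (n + l) (n + j) : ℝ) : ℂ) := by
      intro l j
      show (inner ℂ (Krow j) (lp.single 2 l 1) : ℂ) = _
      rw [lp.inner_single_right, hKrow_apply, RCLike.inner_apply']
      rw [Complex.conj_ofReal, mul_one]
    have hTnorm : ∀ l : ℕ,
        ‖(L.mkContinuous (Real.sqrt S) hLb) (lp.single 2 l 1)‖ ^ 2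
          = ∑' j : ℕ, (F (n + l) (n + j)) ^ 2 := by
      intro l
      have h := lp.norm_rpow_eq_tsum hp2 ((L.mkContinuous (Real.sqrt S) hLb) (lp.single 2 l 1))
      simp only [hrpow] at h
      rw [h]
      congr 1
      funext j
      rw [hTe l j, Complex.norm_real, Real.norm_eq_abs, sq_abs]
    have hmarg := ((summable_prod_of_nonneg (fun q => sq_nonneg _)).mp part1).2
    apply hmarg.congr
    intro l
    exact (hTnorm l).symm
end

section
/- Let μ be a finite positive Borel measure on the unit circle {w ∈ ℂ : |w| = 1} invariant under complex conjugation w ↦ w̄, let {e_m}_{m∈ℤ} be an orthonormal basis of L²(μ) with e_m(w̄) = conj(e_m(w)) for μ-a.e. w and every m, and let R ∈ L^∞(μ) satisfy |R(w)| ≤ 1 μ-a.e., |R(w)| < 1 μ-a.e., and R(w̄) = conj(R(w)) μ-a.e. Let γ_1,...,γ_q > 0 and v_1,...,v_q : ℤ → ℝ. Define F(l,m) = ∫ R(w) e_l(w) e_m(w) dμ(w) + Σ_{k=1}^{q} γ_k v_k(l) v_k(m); then F is real-valued and symmetric. Fix n ∈ ℤ, assume Σ_{j≥0} v_k(n+j)²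 < ∞ for each k, and assume the operator (ℱ_n f)(j) = Σ_{l≥0} F(n+l, n+j) f(l) is a compact self-adjoint operator on ℓ²(ℕ₀). Then 1 + ℱ_n is positive definite: ⟨f, (1 + ℱ_n) f⟩ > 0 for all f ≠ 0; consequently there is ε_n > 0 with 1 + ℱ_n ≥ ε_n, the operator 1 + ℱ_n is boundedly invertible, and for any constant κ the equation (1 + ℱ_n) x = κ δ_0 has a unique solution x ∈ ℓ²(ℕ₀). -/
open MeasureTheory Filter

noncomputable section
set_option synthInstance.maxHeartbeats 1000000
set_option maxHeartbeats 1000000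

theorem aux_real
    (μ : Measure ℂ) [IsFiniteMeasure μ]
    (hconj : μ.map (starRingEnd ℂ) = μ)
    (e : ℤ → ℂ → ℂ)
    (heL2 : ∀ m : ℤ, MemLp (e m) 2 μ)
    (hereal : ∀ m : ℤ, ∀ᵐ w ∂μ, e m ((starRingEnd ℂ) w) = (starRingEnd ℂ) (e m w))
    (R : ℂ → ℂ) (hRmeas : Measurable R)
    (hRconj : ∀ᵐ w ∂μ, R ((starRingEnd ℂ) w) = (starRingEnd ℂ) (R w))
    (q : ℕ) (γ : Fin q → ℝ) (v : Fin q → ℤ → ℝ)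
    (F : ℤ → ℤ → ℂ)
    (hF : ∀ l m : ℤ, F l m =
      (∫ w, R w * e l w * e m w ∂μ) + ∑ k, (γ k : ℂ) * (v k l : ℂ) * (v k m : ℂ)) :
    ∀ l m : ℤ, (F l m).im = 0 ∧ F l m = F m l := by
  have hsym : ∀ l m : ℤ, F l m = F m l := by
    intro l m
    rw [hF, hF]
    congr 1
    · refine integral_congr_ae (Eventually.of_forall fun w => ?_)
      ring
    · exact Finset.sum_congr rfl fun k _ => by ring
  intro l m
  refine ⟨?_, hsym l m⟩
  have hGaesm : AEStronglyMeasurable (fun w => R w * e l w * e m w) μ :=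
    (hRmeas.aestronglyMeasurable.mul (heL2 l).1).mul (heL2 m).1
  have hmap : (∫ w, R w * e l w * e m w ∂μ)
      = ∫ w, R ((starRingEnd ℂ) w) * e l ((starRingEnd ℂ) w) * e m ((starRingEnd ℂ) w) ∂μ := by
    conv_lhs => rw [← hconj]
    rw [integral_map (Complex.continuous_conj.measurable.aemeasurable) ?_]
    rw [hconj]
    exact hGaesm
  have hconjint : (starRingEnd ℂ) (∫ w, R w * e l w * e m w ∂μ)
      = ∫ w, R w * e l w * e m w ∂μ := by
    rw [← integral_conj]
    rw [hmap]
    refine integral_congr_ae ?_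
    filter_upwards [hRconj, hereal l, hereal m] with w h1 h2 h3
    rw [h1, h2, h3]
    simp [map_mul]
  have hconjF : (starRingEnd ℂ) (F l m) = F l m := by
    rw [hF, map_add, hconjint]
    congr 1
    rw [map_sum]
    refine Finset.sum_congr rfl fun k _ => ?_
    simp [map_mul, Complex.conj_ofReal]
  exact Complex.conj_eq_iff_im.mp hconjF

theorem aux_pos
    (μ : Measure ℂ) [IsFiniteMeasure μ]
    (e : ℤ → ℂ → ℂ)
    (heL2 : ∀ m : ℤ, MemLp (e m) 2 μ)
    (horth : ∀ m m' : ℤ,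
      (∫ w, (starRingEnd ℂ) (e m w) * e m' w ∂μ) = if m = m' then 1 else 0)
    (R : ℂ → ℂ) (hRmeas : Measurable R)
    (hRle : ∀ᵐ w ∂μ, ‖R w‖ ≤ 1)
    (hRlt : ∀ᵐ w ∂μ, ‖R w‖ < 1)
    (q : ℕ) (γ : Fin q → ℝ) (hγ : ∀ k, 0 < γ k)
    (v : Fin q → ℤ → ℝ)
    (F : ℤ → ℤ → ℂ)
    (hF : ∀ l m : ℤ, F l m =
      (∫ w, R w * e l w * e m w ∂μ) + ∑ k, (γ k : ℂ) * (v k l : ℂ) * (v k m : ℂ))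
    (n : ℤ)
    (hv2 : ∀ k, Summable (fun j : ℕ => (v k (n + j))^2))
    (T : lp (fun _ : ℕ => ℂ) 2 →L[ℂ] lp (fun _ : ℕ => ℂ) 2)
    (hT : ∀ f : lp (fun _ : ℕ => ℂ) 2, ∀ j : ℕ,
      T f j = ∑' l : ℕ, F (n + l) (n + j) * f l) :
    ∀ f : lp (fun _ : ℕ => ℂ) 2, f ≠ 0 → 0 < (inner ℂ f (f + T f) : ℂ).re := by
  intro f hfne
  -- the L² space and the orthonormal family
  have hELcoe : ∀ m : ℤ, ⇑((heL2 m).toLp (e m)) =ᵐ[μ] e m := fun m => (heL2 m).coeFn_toLp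
  set EL : ℤ → Lp ℂ 2 μ := fun m => (heL2 m).toLp (e m) with hELdef
  have hELinner : ∀ m m' : ℤ, (inner ℂ (EL m) (EL m') : ℂ) = if m = m' then 1 else 0 := by
    intro m m'
    rw [← horth m m', L2.inner_def]
    apply integral_congr_ae
    filter_upwards [hELcoe m, hELcoe m'] with w h1 h2
    rw [RCLike.inner_apply', h1, h2]
  set V : ℕ → Lp ℂ 2 μ := fun l => EL (n + l) with hVdef
  have hVon : Orthonormal ℂ V := by
    rw [orthonormal_iff_ite]
    intro i j
    rw [hELinner]
    congr 1
    simp [add_right_inj]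
  set U := hVon.orthogonalFamily.linearIsometry with hUdef
  have hUsum : ∀ x : lp (fun _ : ℕ => ℂ) 2, HasSum (fun l => x l • V l) (U x) := by
    intro x
    have := hVon.orthogonalFamily.hasSum_linearIsometry x
    simpa [LinearIsometry.toSpanSingleton_apply] using this
  have hUnorm : ∀ x : lp (fun _ : ℕ => ℂ) 2, ‖U x‖ = ‖x‖ := fun x => U.norm_map x
  -- the conjugated multiplication operator
  have hmem : ∀ u : Lp ℂ 2 μ, MemLp (fun w => (starRingEnd ℂ) (R w * u w)) 2 μ := by
    intro u
    refine MemLp.of_le (Lp.memLp u) ?_ ?_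
    · exact (Complex.continuous_conj.comp_aestronglyMeasurable
        (hRmeas.aestronglyMeasurable.mul (Lp.aestronglyMeasurable u)))
    · filter_upwards [hRle] with w hw
      rw [RCLike.norm_conj, norm_mul]
      calc ‖R w‖ * ‖u w‖ ≤ 1 * ‖u w‖ := by
            apply mul_le_mul_of_nonneg_right _ (norm_nonneg _)
            exact hw
        _ = ‖u w‖ := one_mul _
  set crm : Lp ℂ 2 μ → Lp ℂ 2 μ := fun u => (hmem u).toLp _ with hcrmdef
  have hcrmcoe : ∀ u, ⇑(crm u) =ᵐ[μ] fun w => (starRingEnd ℂ) (R w * u w) :=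
    fun u => (hmem u).coeFn_toLp
  have hip : ∀ u1 u2 : Lp ℂ 2 μ,
      (inner ℂ (crm u1) u2 : ℂ) = ∫ w, R w * u1 w * u2 w ∂μ := by
    intro u1 u2
    rw [L2.inner_def]
    apply integral_congr_ae
    filter_upwards [hcrmcoe u1] with w h1
    rw [RCLike.inner_apply', h1]
    simp only [RingHomCompTriple.comp_apply, RingHom.id_apply, starRingEnd_self_apply]
  have hsymm : ∀ u1 u2 : Lp ℂ 2 μ, (inner ℂ (crm u1) u2 : ℂ) = inner ℂ (crm u2) u1 := by
    intro u1 u2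
    rw [hip, hip]
    apply integral_congr_ae
    filter_upwards with w
    ring
  -- decomposition of F entries
  have hFval : ∀ l j : ℕ, F (n + l) (n + j) =
      (inner ℂ (crm (V l)) (V j) : ℂ) + ∑ k, (γ k : ℂ) * (v k (n+l) : ℂ) * (v k (n+j) : ℂ) := by
    intro l j
    rw [hF]
    congr 1
    rw [hip]
    apply integral_congr_ae
    filter_upwards [hELcoe (n + l), hELcoe (n + j)] with w h1 h2
    rw [hVdef]; simp only []
    rw [h1, h2]
  -- discrete sums
  have hsummf : Summable (fun l : ℕ => ‖f l‖^2) := by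
    have := (lp.memℓp f).summable (p := 2) (by norm_num)
    simpa using this
  have hsumvf : ∀ k, Summable (fun l : ℕ => (v k (n+l) : ℂ) * f l) := by
    intro k
    rw [← summable_norm_iff]
    apply Summable.of_nonneg_of_le (fun l => norm_nonneg _)
      (fun l => ?_) (((hv2 k).add hsummf).mul_left (1/2 : ℝ))
    rw [norm_mul, Complex.norm_real, Real.norm_eq_abs]
    have h1 : |v k (n + l)| * ‖f l‖ ≤ (1/2) * ((v k (n+l))^2 + ‖f l‖^2) := by
      nlinarith [sq_nonneg (|v k (n+l)| - ‖f l‖), sq_abs (v k (n+l)), norm_nonneg (f l),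
        abs_nonneg (v k (n+l))]
    exact h1
  set tk : Fin q → ℂ := fun k => ∑' l : ℕ, (v k (n+l) : ℂ) * f l with htkdef
  have htk : ∀ k, HasSum (fun l : ℕ => (v k (n+l) : ℂ) * f l) (tk k) :=
    fun k => (hsumvf k).hasSum
  -- value of T f at j
  have hTfj : ∀ j : ℕ, T f j =
      (inner ℂ (crm (V j)) (U f) : ℂ) + ∑ k, (γ k : ℂ) * (v k (n+j) : ℂ) * tk k := by
    intro j
    rw [hT f j]
    apply HasSum.tsum_eq
    have h1 : HasSum (fun l : ℕ => (inner ℂ (crm (V j)) ((f l : ℂ) • V l) : ℂ))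
        ((inner ℂ (crm (V j)) (U f) : ℂ)) := by
      exact (innerSL ℂ (crm (V j))).hasSum (hUsum f)
    have h2 : HasSum (fun l : ℕ => ∑ k, (γ k : ℂ) * (v k (n+l) : ℂ) * ((v k (n+j) : ℂ) * f l))
        (∑ k, (γ k : ℂ) * (v k (n+j) : ℂ) * tk k) := by
      apply hasSum_sum
      intro k _
      have h3 := ((htk k).mul_left ((γ k : ℂ) * (v k (n+j) : ℂ)))
      convert h3 using 1
      · rfl
      funext l
      ring
    have h4 := h1.add h2
    convert h4 using 1
    funext l
    rw [hFval l j, inner_smul_right, hsymm (V j) (V l), add_mul, Finset.sum_mul]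
    congr 1
    · ring
    · exact Finset.sum_congr rfl fun k _ => by ring
  -- the quadratic form
  have hinner : (inner ℂ f (T f) : ℂ) =
      (inner ℂ (crm (U f)) (U (star f)) : ℂ) + ∑ k, (γ k : ℂ) * ((starRingEnd ℂ) (tk k) * tk k) := by
    have h0 : HasSum (fun j : ℕ => (inner ℂ (f j) (T f j) : ℂ)) ((inner ℂ f (T f) : ℂ)) :=
      lp.hasSum_inner f (T f)
    have h1 : HasSum (fun j : ℕ => (inner ℂ (crm (U f)) (((star f) j : ℂ) • V j) : ℂ))
        ((inner ℂ (crm (U f)) (U (star f)) : ℂ)) :=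
      (innerSL ℂ (crm (U f))).hasSum (hUsum (star f))
    have h2 : HasSum (fun j : ℕ => ∑ k, (γ k : ℂ) * ((starRingEnd ℂ) ((v k (n+j) : ℂ) * f j) * tk k))
        (∑ k, (γ k : ℂ) * ((starRingEnd ℂ) (tk k) * tk k)) := by
      apply hasSum_sum
      intro k _
      have h3 := ((htk k).star.mul_left ((γ k : ℂ))).mul_right (tk k)
      convert h3 using 1
      · rfl
      · funext j; simp only [starRingEnd_apply]; ring
      · simp only [starRingEnd_apply]; ring
    have h4 := h1.add h2
    refine h0.unique ?_
    convert h4 using 1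
    funext j
    rw [hTfj j]
    rw [RCLike.inner_apply', inner_smul_right, hsymm (U f) (V j)]
    have hstj : ((star f) j : ℂ) = (starRingEnd ℂ) (f j) := by
      rw [lp.star_apply]; rfl
    rw [hstj]
    rw [mul_add, Finset.mul_sum]
    congr 1
    refine Finset.sum_congr rfl fun k _ => ?_
    simp only [map_mul, Complex.conj_ofReal]
    ring
  set gg := U f with hggdef
  set hh := U (star f) with hhhdef
  have hC : (inner ℂ (crm gg) hh : ℂ) = ∫ w, R w * gg w * hh w ∂μ := hip gg hh
  -- integrability facts
  have hφint : Integrable (fun w => ‖gg w‖ * ‖hh w‖) μ := by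
    have h1 := (L2.integrable_inner (𝕜 := ℂ) gg hh).norm
    refine h1.congr (Eventually.of_forall fun w => ?_)
    simp only [RCLike.inner_apply', norm_mul, RCLike.norm_conj]
  have hψaesm : AEStronglyMeasurable (fun w => ‖R w‖ * (‖gg w‖ * ‖hh w‖)) μ :=
    (hRmeas.norm.aestronglyMeasurable).mul
      ((Lp.aestronglyMeasurable gg).norm.mul (Lp.aestronglyMeasurable hh).norm)
  have hRnorm : ∀ᵐ w ∂μ, ‖R w‖ ≤ 1 := by
    filter_upwards [hRle] with w hw
    exact hw
  have hRnormlt : ∀ᵐ w ∂μ, ‖R w‖ < 1 := by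
    filter_upwards [hRlt] with w hw
    exact hw
  have hψint : Integrable (fun w => ‖R w‖ * (‖gg w‖ * ‖hh w‖)) μ := by
    refine Integrable.mono' hφint hψaesm ?_
    filter_upwards [hRnorm] with w hw
    rw [Real.norm_eq_abs, abs_of_nonneg (by positivity)]
    exact mul_le_of_le_one_left (by positivity) hw
  have hCnorm : ‖(inner ℂ (crm gg) hh : ℂ)‖ ≤ ∫ w, ‖R w‖ * (‖gg w‖ * ‖hh w‖) ∂μ := by
    rw [hC]
    refine (norm_integral_le_integral_norm _).trans (le_of_eq ?_)
    refine integral_congr_ae (Eventually.of_forall fun w => ?_)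
    simp only [norm_mul, mul_assoc]
  -- Cauchy-Schwarz in real L²
  have hφle : (∫ w, ‖gg w‖ * ‖hh w‖ ∂μ) ≤ ‖f‖ * ‖f‖ := by
    have hgmem : MemLp (fun w => ‖gg w‖) 2 μ := (Lp.memLp gg).norm
    have hhmem : MemLp (fun w => ‖hh w‖) 2 μ := (Lp.memLp hh).norm
    set Gn : Lp ℝ 2 μ := hgmem.toLp _ with hGndef
    set Hn : Lp ℝ 2 μ := hhmem.toLp _ with hHndef
    have h1 : (∫ w, ‖gg w‖ * ‖hh w‖ ∂μ) = (inner ℝ Gn Hn : ℝ) := by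
      rw [L2.inner_def]
      refine integral_congr_ae ?_
      filter_upwards [hgmem.coeFn_toLp, hhmem.coeFn_toLp] with w h2 h3
      rw [RCLike.inner_apply', h2, h3]
      simp
    rw [h1]
    have h4 : (inner ℝ Gn Hn : ℝ) ≤ ‖Gn‖ * ‖Hn‖ := real_inner_le_norm Gn Hn
    have h5 : ‖Gn‖ = ‖f‖ := by
      rw [hGndef, Lp.norm_toLp, ← hUnorm f]
      rw [Lp.norm_def]
      congr 1
      exact eLpNorm_norm gg
    have h6 : ‖Hn‖ = ‖f‖ := by
      rw [hHndef, Lp.norm_toLp]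
      have : ‖hh‖ = ‖f‖ := by rw [hhhdef, hUnorm, norm_star]
      rw [← this, Lp.norm_def]
      congr 1
      exact eLpNorm_norm hh
    rw [h5, h6] at h4
    exact h4
  -- nonnegativity / strict bound
  have hψnonneg : 0 ≤ ∫ w, ‖R w‖ * (‖gg w‖ * ‖hh w‖) ∂μ :=
    integral_nonneg fun w => by positivity
  have hψleφ : (∫ w, ‖R w‖ * (‖gg w‖ * ‖hh w‖) ∂μ) ≤ ∫ w, ‖gg w‖ * ‖hh w‖ ∂μ := by
    refine integral_mono_ae hψint hφint ?_
    filter_upwards [hRnorm] with w hw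
    exact mul_le_of_le_one_left (by positivity) hw
  have hfpos : (0:ℝ) < ‖f‖ := norm_pos_iff.mpr hfne
  have hψlt : (∫ w, ‖R w‖ * (‖gg w‖ * ‖hh w‖) ∂μ) < ‖f‖ * ‖f‖ := by
    rcases lt_or_ge 0 (∫ w, ‖gg w‖ * ‖hh w‖ ∂μ) with hcpos | hcle
    · refine lt_of_lt_of_le ?_ hφle
      by_contra hcon
      push_neg at hcon
      have heq : (∫ w, ‖R w‖ * (‖gg w‖ * ‖hh w‖) ∂μ) = ∫ w, ‖gg w‖ * ‖hh w‖ ∂μ :=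
        le_antisymm hψleφ hcon
      have hzero : (∫ w, (‖gg w‖ * ‖hh w‖ - ‖R w‖ * (‖gg w‖ * ‖hh w‖)) ∂μ) = 0 := by
        rw [integral_sub hφint hψint, heq, sub_self]
      have hae : (fun w => ‖gg w‖ * ‖hh w‖ - ‖R w‖ * (‖gg w‖ * ‖hh w‖)) =ᵐ[μ] 0 := by
        refine (integral_eq_zero_iff_of_nonneg_ae ?_ (hφint.sub hψint)).mp hzero
        filter_upwards [hRnorm] with w hw
        have : ‖R w‖ * (‖gg w‖ * ‖hh w‖) ≤ ‖gg w‖ * ‖hh w‖ :=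
          mul_le_of_le_one_left (by positivity) hw
        simpa using this
      have hφzero : (fun w => ‖gg w‖ * ‖hh w‖) =ᵐ[μ] 0 := by
        filter_upwards [hae, hRnormlt] with w h1 h2
        have h3 : (1 - ‖R w‖) * (‖gg w‖ * ‖hh w‖) = 0 := by
          have := h1
          simp only [Pi.zero_apply] at this ⊢
          ring_nf
          ring_nf at this
          linarith
        have h4 : (0:ℝ) < 1 - ‖R w‖ := by linarith
        simp only [Pi.zero_apply]
        exact (mul_eq_zero.mp h3).resolve_left (ne_of_gt h4)
      have : (∫ w, ‖gg w‖ * ‖hh w‖ ∂μ) = 0 := by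
        rw [integral_congr_ae hφzero]
        simp
      linarith
    · calc (∫ w, ‖R w‖ * (‖gg w‖ * ‖hh w‖) ∂μ) ≤ 0 := hψleφ.trans hcle
        _ < ‖f‖ * ‖f‖ := by positivity
  -- conclusion
  have hff : (inner ℂ f f : ℂ).re = ‖f‖ * ‖f‖ := by
    rw [inner_self_eq_norm_sq_to_K]
    simp [sq]
  have hDre : (0:ℝ) ≤ (∑ k, (γ k : ℂ) * ((starRingEnd ℂ) (tk k) * tk k)).re := by
    rw [Complex.re_sum]
    apply Finset.sum_nonneg
    intro k _
    have h1 : (starRingEnd ℂ) (tk k) * tk k = ((Complex.normSq (tk k) : ℝ) : ℂ) := by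
      rw [mul_comm, Complex.mul_conj]
    rw [h1, ← Complex.ofReal_mul]
    rw [Complex.ofReal_re]
    exact mul_nonneg (hγ k).le (Complex.normSq_nonneg _)
  have hCre : -(‖f‖ * ‖f‖) < (inner ℂ (crm gg) hh : ℂ).re := by
    have h1 : |(inner ℂ (crm gg) hh : ℂ).re| ≤ ‖(inner ℂ (crm gg) hh : ℂ)‖ := Complex.abs_re_le_norm _
    have h2 := neg_abs_le ((inner ℂ (crm gg) hh : ℂ).re)
    nlinarith [hCnorm, hψlt]
  rw [inner_add_right, Complex.add_re, hff, hinner, Complex.add_re]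
  linarith

variable {E : Type*} [NormedAddCommGroup E] [InnerProductSpace ℂ E] [CompleteSpace E]

theorem aux_gap (T : E →L[ℂ] E) (hTsa : IsSelfAdjoint T) (hTcpt : IsCompactOperator ⇑T)
    (hpos : ∀ f : E, f ≠ 0 → 0 < (inner ℂ f (f + T f) : ℂ).re) :
    ∃ ε : ℝ, 0 < ε ∧ ∀ f : E, ε * ‖f‖^2 ≤ (inner ℂ f (f + T f) : ℂ).re := by
  set A : E →L[ℂ] E := 1 + T with hAdef
  have hAapp : ∀ f, A f = f + T f := fun f => by simp [hAdef]
  have hAsa : IsSelfAdjoint A := by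
    have h1 : IsSelfAdjoint (1 : E →L[ℂ] E) := by
      rw [IsSelfAdjoint]; simp
    exact h1.add hTsa
  have hQ0 : ∀ f : E, f ≠ 0 → 0 < (inner ℂ f (A f) : ℂ).re := by
    intro f hf; rw [hAapp]; exact hpos f hf
  have hAnonneg : 0 ≤ A := by
    rw [ContinuousLinearMap.nonneg_iff_isPositive]
    refine ⟨hAsa.isSymmetric, fun x => ?_⟩
    rcases eq_or_ne x 0 with rfl | hx
    · simp [ContinuousLinearMap.reApplyInnerSelf]
    · have h := (hQ0 x hx).le
      rw [ContinuousLinearMap.reApplyInnerSelf_apply]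
      calc (0:ℝ) ≤ (inner ℂ x (A x) : ℂ).re := h
        _ = RCLike.re (inner ℂ (A x) x : ℂ) := by
            simpa using inner_re_symm (𝕜 := ℂ) x (A x)
  set B : E →L[ℂ] E := CFC.sqrt A with hBdef
  have hBsa : IsSelfAdjoint B := (CFC.sqrt_nonneg (a := A)).isSelfAdjoint
  have hBB : ∀ x, B (B x) = A x := fun x => by
    conv_rhs => rw [← CFC.sqrt_mul_sqrt_self A hAnonneg]
    rfl
  have hQB : ∀ x : E, (inner ℂ x (A x) : ℂ).re = ‖B x‖^2 := by
    intro x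
    rw [← hBB x]
    conv_lhs => rw [← hBsa.adjoint_eq]
    rw [ContinuousLinearMap.adjoint_inner_right, hBsa.adjoint_eq,
      inner_self_eq_norm_sq_to_K]
    simp [← Complex.ofReal_pow]
  by_contra hcon
  push_neg at hcon
  have hseq : ∀ j : ℕ, ∃ u : E, ‖u‖ = 1 ∧ (inner ℂ u (A u) : ℂ).re < 1/(j+1) := by
    intro j
    obtain ⟨f, hf⟩ := hcon (1/(j+1)) (by positivity)
    rw [← hAapp] at hf
    have hfne : f ≠ 0 := by
      rintro rfl
      simp only [map_zero, inner_zero_left, Complex.zero_re, norm_zero] at hf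
      norm_num at hf
    have hn : (0:ℝ) < ‖f‖ := norm_pos_iff.mpr hfne
    refine ⟨((‖f‖⁻¹ : ℝ) : ℂ) • f, ?_, ?_⟩
    · rw [norm_smul]
      simp [abs_of_pos (inv_pos.mpr hn), inv_mul_cancel₀ hn.ne']
    · have heq : (inner ℂ (((‖f‖⁻¹ : ℝ) : ℂ) • f) (A (((‖f‖⁻¹ : ℝ) : ℂ) • f)) : ℂ).re
          = ‖f‖⁻¹ * (‖f‖⁻¹ * (inner ℂ f (A f) : ℂ).re) := by
        rw [A.map_smul, inner_smul_left, inner_smul_right, Complex.conj_ofReal,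
          Complex.re_ofReal_mul, Complex.re_ofReal_mul]
      rw [heq]
      rw [← mul_assoc]
      calc ‖f‖⁻¹ * ‖f‖⁻¹ * (inner ℂ f (A f) : ℂ).re
          < ‖f‖⁻¹ * ‖f‖⁻¹ * (1/(j+1) * ‖f‖^2) := by
            apply mul_lt_mul_of_pos_left hf (by positivity)
        _ = 1/(j+1) * (‖f‖⁻¹ * ‖f‖ * (‖f‖⁻¹ * ‖f‖)) := by ring
        _ = 1/(j+1) := by rw [inv_mul_cancel₀ hn.ne']; ring
  choose u hu1 hu2 using hseq
  have hune : ∀ j, u j ≠ 0 := fun j h => by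
    have := hu1 j; rw [h, norm_zero] at this; norm_num at this
  have hBu : Tendsto (fun j => B (u j)) atTop (nhds 0) := by
    rw [tendsto_zero_iff_norm_tendsto_zero]
    have h1 : Tendsto (fun j : ℕ => ‖B (u j)‖^2) atTop (nhds 0) := by
      apply squeeze_zero (fun j => by positivity)
        (fun j => ((hQB (u j)) ▸ (hu2 j)).le)
      exact tendsto_one_div_add_atTop_nhds_zero_nat
    have h2 := h1.sqrt
    simpa [Real.sqrt_sq (norm_nonneg _)] using h2
  have hAu : Tendsto (fun j => A (u j)) atTop (nhds 0) := by
    have h3 := (B.continuous.tendsto 0).comp hBu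
    simp only [Function.comp_def, map_zero] at h3
    simpa [hBB] using h3
  obtain ⟨K, hK, hTK⟩ := hTcpt.image_closedBall_subset_compact 1
  obtain ⟨y, -, φ, hφ, hy⟩ := hK.tendsto_subseq (x := fun j => T (u j))
    (fun j => hTK ⟨u j, by simp [hu1 j], rfl⟩)
  have huy : Tendsto (fun j => u (φ j)) atTop (nhds (-y)) := by
    have heq : (fun j => u (φ j)) = fun j => A (u (φ j)) - T (u (φ j)) := by
      funext j; rw [hAapp]; abel
    rw [heq]
    simpa using (hAu.comp hφ.tendsto_atTop).sub hy
  have hyn : ‖(-y : E)‖ = 1 := by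
    have h4 := (continuous_norm.tendsto (-y : E)).comp huy
    have h5 : (fun j => ‖u (φ j)‖) = fun _ => (1:ℝ) := funext fun j => hu1 (φ j)
    rw [Function.comp_def] at h4
    rw [h5] at h4
    exact (tendsto_nhds_unique tendsto_const_nhds h4).symm
  have hyne : (-y : E) ≠ 0 := fun h => by rw [h, norm_zero] at hyn; norm_num at hyn
  have hQy : (inner ℂ (-y : E) (A (-y)) : ℂ).re = 0 := by
    have hcontQ : Continuous (fun x : E => (inner ℂ x (A x) : ℂ).re) :=
      Complex.continuous_re.comp (continuous_inner.comp (continuous_id.prodMk A.continuous))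
    have hcont := (hcontQ.tendsto (-y : E)).comp huy
    rw [Function.comp_def] at hcont
    have hsq : Tendsto (fun j => (inner ℂ (u (φ j)) (A (u (φ j))) : ℂ).re) atTop (nhds 0) := by
      apply squeeze_zero (fun j => (hQ0 _ (hune (φ j))).le) (fun j => ?_)
        tendsto_one_div_add_atTop_nhds_zero_nat
      refine (hu2 (φ j)).le.trans ?_
      have hj : (j:ℝ) + 1 ≤ (φ j : ℝ) + 1 := by
        have h0 : j ≤ φ j := hφ.le_apply
        have h1 := (Nat.cast_le (α := ℝ)).mpr h0
        linarith
      exact one_div_le_one_div_of_le (by positivity) hj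
    exact tendsto_nhds_unique hcont hsq
  exact absurd hQy (ne_of_gt (hQ0 _ hyne))

theorem aux_inv (T : E →L[ℂ] E)
    (hpos : ∀ f : E, f ≠ 0 → 0 < (inner ℂ f (f + T f) : ℂ).re)
    (hgap : ∃ ε : ℝ, 0 < ε ∧ ∀ f : E, ε * ‖f‖^2 ≤ (inner ℂ f (f + T f) : ℂ).re) :
    ∃ S : E →L[ℂ] E, (∀ f, S f + T (S f) = f) ∧ (∀ f, S (f + T f) = f) := by
  obtain ⟨ε, hε, hgap⟩ := hgap
  set A : E →L[ℂ] E := 1 + T with hAdef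
  have hAapp : ∀ f, A f = f + T f := fun f => by simp [hAdef]
  have hbound : ∀ f : E, ‖f‖ ≤ ε⁻¹ * ‖A f‖ := by
    intro f
    rcases eq_or_ne f 0 with rfl | hf
    · simp
    · have h1 : ε * ‖f‖^2 ≤ (inner ℂ f (A f) : ℂ).re := hAapp f ▸ hgap f
      have h2 : (inner ℂ f (A f) : ℂ).re ≤ ‖f‖ * ‖A f‖ := by
        calc (inner ℂ f (A f) : ℂ).re ≤ ‖(inner ℂ f (A f) : ℂ)‖ := Complex.re_le_norm _
          _ = ‖(inner ℂ f (A f) : ℂ)‖ := rfl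
          _ ≤ ‖f‖ * ‖A f‖ := norm_inner_le_norm f (A f)
    -- ε ‖f‖² ≤ ‖f‖ ‖A f‖ ⇒ ε ‖f‖ ≤ ‖A f‖
      have hn : (0:ℝ) < ‖f‖ := norm_pos_iff.mpr hf
      rw [le_inv_mul_iff₀ hε]
      nlinarith [h1.trans h2]
  have hanti : AntilipschitzWith (ε⁻¹).toNNReal ⇑A := by
    apply A.antilipschitz_of_bound
    intro x
    simpa [Real.coe_toNNReal _ (by positivity : (0:ℝ) ≤ ε⁻¹)] using hbound x
  have hker : A.ker = ⊥ := by
    rw [LinearMap.ker_eq_bot']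
    intro m hm
    have := hbound m
    rw [show A m = 0 from hm] at this
    simpa using norm_le_zero_iff.mp (by simpa using this)
  have hclosed : IsClosed (Set.range ⇑A) := hanti.isClosed_range A.uniformContinuous
  have hclosedK : IsClosed ((A.range : Submodule ℂ E) : Set E) := by
    have hs : ((A.range : Submodule ℂ E) : Set E) = Set.range ⇑A := by
      ext y; simp [LinearMap.mem_range]
    rwa [hs]
  haveI : CompleteSpace (A.range : Submodule ℂ E) := hclosedK.completeSpace_coe
  have hKbot : (A.range)ᗮ = ⊥ := by
    rw [Submodule.eq_bot_iff]
    intro x hx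
    by_contra hxne
    have h0 : (inner ℂ (A x) x : ℂ) = 0 :=
      (Submodule.mem_orthogonal _ x).mp hx (A x) (LinearMap.mem_range_self _ x)
    have h1 : (inner ℂ x (A x) : ℂ).re = 0 := by
      have := inner_re_symm (𝕜 := ℂ) x (A x)
      simp only [RCLike.re_to_complex] at this
      rw [this, h0, Complex.zero_re]
    have h2 := hAapp x ▸ hgap x
    rw [h1] at h2
    have hn : (0:ℝ) < ‖x‖ := norm_pos_iff.mpr hxne
    have hp : (0:ℝ) < ε * ‖x‖^2 := by positivity
    linarith
  have hKtop : A.range = ⊤ := Submodule.orthogonal_eq_bot_iff.mp hKbot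
  let eqv := ContinuousLinearEquiv.ofBijective A hker hKtop
  refine ⟨eqv.symm.toContinuousLinearMap, fun f => ?_, fun f => ?_⟩
  · have h := ContinuousLinearEquiv.ofBijective_apply_symm_apply A hker hKtop f
    rw [← hAapp]
    exact h
  · have h := ContinuousLinearEquiv.ofBijective_symm_apply_apply A hker hKtop f
    rw [← hAapp]
    exact h

theorem stmt_14
    (μ : Measure ℂ) [IsFiniteMeasure μ]
    (hcirc : ∀ᵐ w ∂μ, ‖w‖ = 1)
    (hconj : μ.map (starRingEnd ℂ) = μ)
    (e : ℤ → ℂ → ℂ)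
    (heL2 : ∀ m : ℤ, MemLp (e m) 2 μ)
    (horth : ∀ m m' : ℤ,
      (∫ w, (starRingEnd ℂ) (e m w) * e m' w ∂μ) = if m = m' then 1 else 0)
    (hcomplete : ∀ h : ℂ → ℂ, MemLp h 2 μ →
      (∀ m : ℤ, (∫ w, (starRingEnd ℂ) (e m w) * h w ∂μ) = 0) → h =ᵐ[μ] 0)
    (hereal : ∀ m : ℤ, ∀ᵐ w ∂μ, e m ((starRingEnd ℂ) w) = (starRingEnd ℂ) (e m w))
    (R : ℂ → ℂ) (hRmeas : Measurable R)
    (hRle : ∀ᵐ w ∂μ, ‖R w‖ ≤ 1)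
    (hRlt : ∀ᵐ w ∂μ, ‖R w‖ < 1)
    (hRconj : ∀ᵐ w ∂μ, R ((starRingEnd ℂ) w) = (starRingEnd ℂ) (R w))
    (q : ℕ) (γ : Fin q → ℝ) (hγ : ∀ k, 0 < γ k)
    (v : Fin q → ℤ → ℝ)
    (F : ℤ → ℤ → ℂ)
    (hF : ∀ l m : ℤ, F l m =
      (∫ w, R w * e l w * e m w ∂μ) + ∑ k, (γ k : ℂ) * (v k l : ℂ) * (v k m : ℂ))
    (n : ℤ)
    (hv2 : ∀ k, Summable (fun j : ℕ => (v k (n + j))^2))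
    (T : lp (fun _ : ℕ => ℂ) 2 →L[ℂ] lp (fun _ : ℕ => ℂ) 2)
    (hT : ∀ f : lp (fun _ : ℕ => ℂ) 2, ∀ j : ℕ,
      T f j = ∑' l : ℕ, F (n + l) (n + j) * f l)
    (hTsa : IsSelfAdjoint T) (hTcpt : IsCompactOperator ⇑T) :
    (∀ l m : ℤ, (F l m).im = 0 ∧ F l m = F m l) ∧
    (∀ f : lp (fun _ : ℕ => ℂ) 2, f ≠ 0 →
      0 < (inner ℂ f (f + T f) : ℂ).re) ∧
    (∃ ε : ℝ, 0 < ε ∧ ∀ f : lp (fun _ : ℕ => ℂ) 2,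
      ε * ‖f‖^2 ≤ (inner ℂ f (f + T f) : ℂ).re) ∧
    (∃ S : lp (fun _ : ℕ => ℂ) 2 →L[ℂ] lp (fun _ : ℕ => ℂ) 2,
      (∀ f, S f + T (S f) = f) ∧ (∀ f, S (f + T f) = f)) ∧
    (∀ κ : ℂ, ∃! x : lp (fun _ : ℕ => ℂ) 2, x + T x = κ • lp.single 2 0 1) := by
  have hreal := aux_real μ hconj e heL2 hereal R hRmeas hRconj q γ v F hF
  have hpos := aux_pos μ e heL2 horth R hRmeas hRle hRlt q γ hγ v F hF n hv2 T hT
  have hgap := aux_gap T hTsa hTcpt hpos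
  have hinv := aux_inv T hpos hgap
  refine ⟨hreal, hpos, hgap, hinv, ?_⟩
  intro κ
  obtain ⟨S, hS1, hS2⟩ := hinv
  refine ⟨S (κ • lp.single 2 0 1), hS1 _, fun y hy => ?_⟩
  calc y = S (y + T y) := (hS2 y).symm
    _ = S (κ • lp.single 2 0 1) := by rw [hy]
end
end

section
/- Let a : ℤ → (0,∞), b : ℤ → ℝ, λ ∈ ℝ, and let ψ_+ and ψ_- be solutions of τu = λu such that W(ψ_-, conj ψ_-) = -W(ψ_+, conj ψ_+) ≠ 0 (note conj ψ_± are again solutions since λ, a, b are real, so all these Wronskians are independent of n). Define α = W(ψ_-, ψ_+) / W(ψ_-, conj ψ_-) and β_± = W(ψ_∓, conj ψ_±) / W(ψ_±, conj ψ_±). Then: (i) the scattering relations ψ_+ = α conj(ψ_-) + β_- ψ_- and ψ_- = α conj(ψ_+) + β_+ ψ_+ hold; (ii) conj(β_+) = -β_-; (iii) |α|² = 1 + |β_+|² = 1 + |β_-|², and in particular |α| ≥ 1. -/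
lemma prop_zero (a b : ℤ → ℝ) (ha : ∀ n, a n ≠ 0) (lam : ℝ) (u : ℤ → ℂ)
    (hu : ∀ n : ℤ, (a n:ℂ) * u (n+1) + (a (n-1):ℂ) * u (n-1) + (b n:ℂ) * u n = (lam:ℂ) * u n)
    (h0 : u 0 = 0) (h1 : u 1 = 0) : ∀ n : ℤ, u n = 0 := by
  have key : ∀ n : ℤ, u n = 0 ∧ u (n+1) = 0 := by
    intro n
    induction n using Int.induction_on with
    | zero => exact ⟨h0, h1⟩
    | succ k ih =>
      refine ⟨ih.2, ?_⟩
      have h := hu (k+1)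
      rw [show (k:ℤ)+1-1 = k by ring, ih.1, ih.2] at h
      have h2 : (a (k+1):ℂ) * u (k+1+1) = 0 := by linear_combination h
      rcases mul_eq_zero.mp h2 with h3 | h3
      · exact absurd (Complex.ofReal_eq_zero.mp h3) (ha _)
      · exact h3
    | pred k ih =>
      have h := hu (-k)
      rw [ih.1, ih.2] at h
      have h2 : (a (-k-1):ℂ) * u (-k-1) = 0 := by linear_combination h
      refine ⟨?_, by rw [show (-(k:ℤ)-1+1) = -k by ring]; exact ih.1⟩
      rcases mul_eq_zero.mp h2 with h3 | h3
      · exact absurd (Complex.ofReal_eq_zero.mp h3) (ha _)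
      · exact h3
  exact fun n => (key n).1

theorem stmt_17
    (a : ℤ → ℝ) (b : ℤ → ℝ) (ha : ∀ n, 0 < a n) (lam : ℝ)
    (ψp ψm : ℤ → ℂ)
    (hψp : ∀ n : ℤ, (a n : ℂ) * ψp (n+1) + (a (n-1) : ℂ) * ψp (n-1) + (b n : ℂ) * ψp n
      = (lam : ℂ) * ψp n)
    (hψm : ∀ n : ℤ, (a n : ℂ) * ψm (n+1) + (a (n-1) : ℂ) * ψm (n-1) + (b n : ℂ) * ψm n
      = (lam : ℂ) * ψm n)
    (W : (ℤ → ℂ) → (ℤ → ℂ) → ℂ)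
    (hW : ∀ u v : ℤ → ℂ, W u v = (a 0 : ℂ) * (u 0 * v 1 - u 1 * v 0))
    (hWopp : W ψm (fun n => (starRingEnd ℂ) (ψm n))
      = - W ψp (fun n => (starRingEnd ℂ) (ψp n)))
    (hWne : W ψp (fun n => (starRingEnd ℂ) (ψp n)) ≠ 0)
    (α βp βm : ℂ)
    (hα : α = W ψm ψp / W ψm (fun n => (starRingEnd ℂ) (ψm n)))
    (hβp : βp = W ψm (fun n => (starRingEnd ℂ) (ψp n))
      / W ψp (fun n => (starRingEnd ℂ) (ψp n)))
    (hβm : βm = W ψp (fun n => (starRingEnd ℂ) (ψm n))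
      / W ψm (fun n => (starRingEnd ℂ) (ψm n))) :
    (∀ n : ℤ, ψp n = α * (starRingEnd ℂ) (ψm n) + βm * ψm n) ∧
    (∀ n : ℤ, ψm n = α * (starRingEnd ℂ) (ψp n) + βp * ψp n) ∧
    (starRingEnd ℂ) βp = -βm ∧
    ‖α‖ ^ 2 = 1 + ‖βp‖ ^ 2 ∧
    ‖α‖ ^ 2 = 1 + ‖βm‖ ^ 2 ∧
    1 ≤ ‖α‖ := by
  have ha' : ∀ n, a n ≠ 0 := fun n => (ha n).ne'
  -- conjugate solutions
  have hcm : ∀ n : ℤ, (a n:ℂ) * (starRingEnd ℂ) (ψm (n+1)) + (a (n-1):ℂ) * (starRingEnd ℂ) (ψm (n-1))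
      + (b n:ℂ) * (starRingEnd ℂ) (ψm n) = (lam:ℂ) * (starRingEnd ℂ) (ψm n) := by
    intro n; have := congrArg (starRingEnd ℂ) (hψm n); simpa using this
  have hcp : ∀ n : ℤ, (a n:ℂ) * (starRingEnd ℂ) (ψp (n+1)) + (a (n-1):ℂ) * (starRingEnd ℂ) (ψp (n-1))
      + (b n:ℂ) * (starRingEnd ℂ) (ψp n) = (lam:ℂ) * (starRingEnd ℂ) (ψp n) := by
    intro n; have := congrArg (starRingEnd ℂ) (hψp n); simpa using this
  -- expanded Wronskians
  have EWp : W ψp (fun n => (starRingEnd ℂ) (ψp n))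
      = (a 0:ℂ) * (ψp 0 * (starRingEnd ℂ) (ψp 1) - ψp 1 * (starRingEnd ℂ) (ψp 0)) := by
    simp only [hW]
  have EWm : W ψm (fun n => (starRingEnd ℂ) (ψm n))
      = (a 0:ℂ) * (ψm 0 * (starRingEnd ℂ) (ψm 1) - ψm 1 * (starRingEnd ℂ) (ψm 0)) := by
    simp only [hW]
  have hWpne : (a 0:ℂ) * (ψp 0 * (starRingEnd ℂ) (ψp 1) - ψp 1 * (starRingEnd ℂ) (ψp 0)) ≠ 0 :=
    EWp ▸ hWne
  have hWmne : (a 0:ℂ) * (ψm 0 * (starRingEnd ℂ) (ψm 1) - ψm 1 * (starRingEnd ℂ) (ψm 0)) ≠ 0 := by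
    rw [← EWm, hWopp]; exact neg_ne_zero.mpr hWne
  have hC : (a 0:ℂ) * (ψm 0 * (starRingEnd ℂ) (ψm 1) - ψm 1 * (starRingEnd ℂ) (ψm 0))
      = -((a 0:ℂ) * (ψp 0 * (starRingEnd ℂ) (ψp 1) - ψp 1 * (starRingEnd ℂ) (ψp 0))) := by
    rw [← EWp, ← EWm]; exact hWopp
  -- part (i), first relation
  have rel1 : ∀ n : ℤ, ψp n = α * (starRingEnd ℂ) (ψm n) + βm * ψm n := by
    have base0 : ψp 0 = α * (starRingEnd ℂ) (ψm 0) + βm * ψm 0 := by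
      simp only [hα, hβm, hW]
      rw [div_mul_eq_mul_div, div_mul_eq_mul_div, ← add_div, eq_div_iff hWmne]
      ring
    have base1 : ψp 1 = α * (starRingEnd ℂ) (ψm 1) + βm * ψm 1 := by
      simp only [hα, hβm, hW]
      rw [div_mul_eq_mul_div, div_mul_eq_mul_div, ← add_div, eq_div_iff hWmne]
      ring
    intro n
    have := prop_zero a b ha' lam
      (fun n => ψp n - α * (starRingEnd ℂ) (ψm n) - βm * ψm n)
      (fun n => by
        linear_combination hψp n - α * hcm n - βm * hψm n)
      (by rw [base0]; ring) (by rw [base1]; ring) n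
    linear_combination this
  have rel2 : ∀ n : ℤ, ψm n = α * (starRingEnd ℂ) (ψp n) + βp * ψp n := by
    have base0 : ψm 0 = α * (starRingEnd ℂ) (ψp 0) + βp * ψp 0 := by
      rw [hα, hWopp]
      simp only [hβp, hW, div_neg]
      rw [neg_mul, div_mul_eq_mul_div, div_mul_eq_mul_div, neg_add_eq_sub, div_sub_div_same,
        eq_div_iff hWpne]
      ring
    have base1 : ψm 1 = α * (starRingEnd ℂ) (ψp 1) + βp * ψp 1 := by
      rw [hα, hWopp]
      simp only [hβp, hW, div_neg]
      rw [neg_mul, div_mul_eq_mul_div, div_mul_eq_mul_div, neg_add_eq_sub, div_sub_div_same,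
        eq_div_iff hWpne]
      ring
    intro n
    have := prop_zero a b ha' lam
      (fun n => ψm n - α * (starRingEnd ℂ) (ψp n) - βp * ψp n)
      (fun n => by
        linear_combination hψm n - α * hcp n - βp * hψp n)
      (by rw [base0]; ring) (by rw [base1]; ring) n
    linear_combination this
  -- part (ii)
  have rel3 : (starRingEnd ℂ) βp = -βm := by
    have hq : (a 0:ℂ) * ((starRingEnd ℂ) (ψp 0) * ψp 1 - (starRingEnd ℂ) (ψp 1) * ψp 0) ≠ 0 :=
      fun h => hWpne (by linear_combination -h)
    rw [hβp, hβm, hWopp]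
    simp only [hW, map_div₀, map_mul, map_sub, Complex.conj_conj, Complex.conj_ofReal,
      div_neg, neg_neg]
    rw [div_eq_div_iff hq hWpne]
    ring
  -- |α|² = 1 + |βp|²
  have key3 : α * (starRingEnd ℂ) α = 1 + βp * (starRingEnd ℂ) βp := by
    have hq : (a 0:ℂ) * ((starRingEnd ℂ) (ψp 0) * ψp 1 - (starRingEnd ℂ) (ψp 1) * ψp 0) ≠ 0 :=
      fun h => hWpne (by linear_combination -h)
    have hDne : (a 0:ℂ) * (ψp 0 * (starRingEnd ℂ) (ψp 1) - ψp 1 * (starRingEnd ℂ) (ψp 0))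
        * ((a 0:ℂ) * ((starRingEnd ℂ) (ψp 0) * ψp 1 - (starRingEnd ℂ) (ψp 1) * ψp 0)) ≠ 0 :=
      mul_ne_zero hWpne hq
    rw [hα, hβp, hWopp]
    simp only [hW, map_div₀, map_mul, map_sub, map_neg, Complex.conj_conj, Complex.conj_ofReal]
    rw [div_mul_div_comm, div_mul_div_comm, neg_mul_neg]
    rw [div_eq_iff hDne, add_mul, one_mul, div_mul_cancel₀ _ hDne]
    linear_combination ((a 0:ℂ) * (ψp 0 * (starRingEnd ℂ) (ψp 1) - ψp 1 * (starRingEnd ℂ) (ψp 0))) * hC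
  have abs3 : ‖α‖ ^ 2 = 1 + ‖βp‖ ^ 2 := by
    have h := key3
    rw [Complex.mul_conj, Complex.mul_conj] at h
    have h' : Complex.normSq α = 1 + Complex.normSq βp := by exact_mod_cast h
    rw [Complex.sq_norm, Complex.sq_norm]; exact h'
  have habsm : ‖βm‖ = ‖βp‖ := by
    rw [← Complex.norm_conj βp, rel3, norm_neg]
  refine ⟨rel1, rel2, rel3, abs3, ?_, ?_⟩
  · rw [habsm]; exact abs3
  · nlinarith [norm_nonneg α, sq_nonneg ‖βp‖, norm_nonneg βp]
end
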